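/- arXiv:0901.1335 — 5 statements merged into one kernel-verified Lean document; each statement's English description precedes it below -/
import Mathlib

section
/- Let p be a prime number and let α = 1 + p^(1/p), where p^(1/p) denotes the positive real p-th root of p. Then for every integer n ≥ 1, the field ℚ(αⁿ) equals ℚ(α); in particular [ℚ(αⁿ) : ℚ] = p for all n ≥ 1. -/
open Polynomial IntermediateField

theorem no_rat_root (p : ℕ) (hp : p.Prime) : ∀ b : ℚ, b ^ p ≠ (p : ℚ) := by
  haveI : Fact p.Prime := ⟨hp⟩
  intro b hb
  have hb0 : b ≠ 0 := by
    rintro rfl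
    rw [zero_pow hp.pos.ne'] at hb
    have : (p:ℚ) ≠ 0 := by exact_mod_cast hp.pos.ne'
    exact this hb.symm
  have h1 : padicValRat p (b ^ p) = p * padicValRat p b := padicValRat.pow b
  rw [hb, padicValRat.self hp.one_lt] at h1
  have hdvd : (p : ℤ) ∣ 1 := ⟨padicValRat p b, h1⟩
  have := Int.le_of_dvd one_pos hdvd
  have := hp.one_lt
  omega

-- key lemma: α^n is not in ⊥
theorem key (p : ℕ) (hp : p.Prime) (β : ℝ) (hβpos : 0 < β) (hβp : β ^ p = p)
    (α : ℝ) (hαβ : α = 1 + β) (hαmem : IsIntegral ℚ α)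
    (hfr : Module.finrank ℚ (ℚ⟮α⟯ : IntermediateField ℚ ℝ) = p)
    (n : ℕ) (hn : 1 ≤ n) (q : ℚ) (hq : α ^ n = (q : ℝ)) : False := by
  haveI : FiniteDimensional ℚ (ℚ⟮α⟯ : IntermediateField ℚ ℝ) :=
    IntermediateField.adjoin.finiteDimensional hαmem
  set F := (ℚ⟮α⟯ : IntermediateField ℚ ℝ)
  -- the canonical embedding
  let ι : F →ₐ[ℚ] ℂ := (Complex.ofRealHom.toRatAlgHom).comp F.val
  have hcard : Fintype.card (F →ₐ[ℚ] ℂ) = p := by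
    rw [AlgHom.card]; exact hfr
  have h2 : 1 < Fintype.card (F →ₐ[ℚ] ℂ) := by rw [hcard]; exact hp.one_lt
  obtain ⟨σ, hσ⟩ := Fintype.exists_ne_of_one_lt_card h2 ι
  -- generators
  set αF : F := AdjoinSimple.gen ℚ α with hαF
  have hcoe : (αF : ℝ) = α := rfl
  -- σ determined by αF
  have hne : σ αF ≠ ι αF := by
    intro h
    apply hσ
    exact (IntermediateField.adjoin.powerBasis hαmem).algHom_ext h
  set z : ℂ := σ αF with hz
  have hιαF : ι αF = (α : ℂ) := rfl
  -- βF
  set βF : F := αF - 1 with hβF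
  have hβFcoe : (βF : ℝ) = β := by
    simp [hβF, hcoe, hαβ]
  have hβFp : βF ^ p = algebraMap ℚ F (p : ℚ) := by
    apply Subtype.ext
    push_cast
    rw [hβFcoe, hβp]
  have hαFn : αF ^ n = algebraMap ℚ F q := by
    apply Subtype.ext
    push_cast
    rw [hcoe] at *
    simpa using hq
  -- transport via σ
  have hz1 : (z - 1) ^ p = (p : ℂ) := by
    have : σ (βF ^ p) = algebraMap ℚ ℂ (p : ℚ) := by rw [hβFp, σ.commutes]
    simpa [hβF, map_sub, map_pow] using this
  have hzn : z ^ n = (q : ℂ) := by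
    have : σ (αF ^ n) = algebraMap ℚ ℂ q := by rw [hαFn, σ.commutes]
    simpa [map_pow] using this
  -- modulus computations
  have habs1 : ‖z - 1‖ = β := by
    have h1 : ‖z - 1‖ ^ p = β ^ p := by
      rw [← norm_pow, hz1, hβp]
      simp [Complex.norm_natCast]
    exact (pow_left_inj₀ (norm_nonneg _) hβpos.le hp.pos.ne').mp h1
  have hα0 : 0 < α := by rw [hαβ]; linarith
  have habsz : ‖z‖ = α := by
    have h1 : ‖z‖ ^ n = α ^ n := by
      rw [← norm_pow, hzn, show ((q:ℂ)) = ((q:ℝ):ℂ) by norm_cast, Complex.norm_real,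
        ← hq, Real.norm_of_nonneg (pow_nonneg hα0.le n)]
    exact (pow_left_inj₀ (norm_nonneg _) hα0.le (by omega)).mp h1
  -- equality in triangle inequality forces z = α
  have hre : (z - 1).re = β := by
    have e1 : Complex.normSq z = Complex.normSq (z - 1) + 2 * (z - 1).re + 1 := by
      simp [Complex.normSq_apply]
      ring
    have e2 : Complex.normSq z = α ^ 2 := by
      rw [← Complex.sq_norm, habsz]
    have e3 : Complex.normSq (z - 1) = β ^ 2 := by
      rw [← Complex.sq_norm, habs1]
    rw [e2, e3, hαβ] at e1
    nlinarith
  have him : (z - 1).im = 0 := by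
    have := Complex.sq_norm (z - 1)
    rw [habs1, Complex.normSq_apply, hre] at this
    nlinarith
  have : z = (α : ℂ) := by
    apply Complex.ext
    · have : z.re - 1 = β := by simpa using hre
      simp [hαβ]; linarith
    · simpa using him
  exact hne (this.trans hιαF.symm)

/-- Let `p` be a prime and `α = 1 + p^(1/p)` (positive real `p`-th root).
Then for every `n ≥ 1`, `ℚ(αⁿ) = ℚ(α)` and `[ℚ(αⁿ) : ℚ] = p`. -/
theorem stmt_1 (p : ℕ) (hp : p.Prime) (α : ℝ)
    (hα : α = 1 + (p : ℝ) ^ ((1 : ℝ) / (p : ℝ))) (n : ℕ) (hn : 1 ≤ n) :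
    IntermediateField.adjoin ℚ {α ^ n} = IntermediateField.adjoin ℚ {α} ∧
      Module.finrank ℚ (IntermediateField.adjoin ℚ {α ^ n} : IntermediateField ℚ ℝ) = p := by
  have hp0 : (0:ℝ) ≤ p := by positivity
  set β : ℝ := (p : ℝ) ^ ((1 : ℝ) / (p : ℝ)) with hβdef
  have hβp : β ^ p = p := by
    rw [hβdef, ← Real.rpow_natCast ((p:ℝ) ^ ((1:ℝ)/(p:ℝ))) p, ← Real.rpow_mul hp0, one_div,
      inv_mul_cancel₀ (by exact_mod_cast hp.pos.ne'), Real.rpow_one]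
  have hβpos : 0 < β := by
    have h0 : 0 ≤ β := Real.rpow_nonneg hp0 _
    rcases h0.lt_or_eq with h | h
    · exact h
    · exfalso
      have : β ^ p = 0 := by rw [← h, zero_pow hp.pos.ne']
      rw [hβp] at this
      have : (0:ℝ) < p := by exact_mod_cast hp.pos
      linarith
  -- minpoly of β
  have hmonic : (X ^ p - C (p:ℚ)).Monic := monic_X_pow_sub_C _ hp.pos.ne'
  have hroot : aeval β (X ^ p - C (p:ℚ)) = 0 := by simp [hβp]
  have hirr : Irreducible (X ^ p - C (p:ℚ)) :=
    X_pow_sub_C_irreducible_of_prime hp (no_rat_root p hp)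
  have hmin : minpoly ℚ β = X ^ p - C (p:ℚ) :=
    (minpoly.eq_of_irreducible_of_monic hirr hroot hmonic).symm
  have hβint : IsIntegral ℚ β := ⟨X ^ p - C (p:ℚ), hmonic, by simpa using hroot⟩
  have hαint : IsIntegral ℚ α := by rw [hα]; exact isIntegral_one.add hβint
  -- ℚ(α) = ℚ(β)
  have hadj : (ℚ⟮α⟯ : IntermediateField ℚ ℝ) = ℚ⟮β⟯ := by
    apply le_antisymm
    · rw [adjoin_le_iff, Set.singleton_subset_iff]
      have hb : β ∈ (ℚ⟮β⟯ : IntermediateField ℚ ℝ) := mem_adjoin_simple_self ℚ β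
      rw [hα]
      exact add_mem (one_mem _) hb
    · rw [adjoin_le_iff, Set.singleton_subset_iff]
      have ha : α ∈ (ℚ⟮α⟯ : IntermediateField ℚ ℝ) := mem_adjoin_simple_self ℚ α
      have : β = α - 1 := by rw [hα]; ring
      rw [this]
      exact sub_mem ha (one_mem _)
  have hfrβ : Module.finrank ℚ (ℚ⟮β⟯ : IntermediateField ℚ ℝ) = p := by
    rw [IntermediateField.adjoin.finrank hβint, hmin, natDegree_X_pow_sub_C]
  have hfr : Module.finrank ℚ (ℚ⟮α⟯ : IntermediateField ℚ ℝ) = p := by rw [hadj, hfrβ]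
  haveI hFD : FiniteDimensional ℚ (ℚ⟮α⟯ : IntermediateField ℚ ℝ) :=
    IntermediateField.adjoin.finiteDimensional hαint
  -- E := ℚ(α^n) ≤ ℚ(α)
  have hmemF : α ^ n ∈ (ℚ⟮α⟯ : IntermediateField ℚ ℝ) :=
    pow_mem (mem_adjoin_simple_self ℚ α) n
  have hle : (ℚ⟮α ^ n⟯ : IntermediateField ℚ ℝ) ≤ ℚ⟮α⟯ := by
    rw [adjoin_le_iff, Set.singleton_subset_iff]; exact hmemF
  have hαnint : IsIntegral ℚ (α ^ n) := hαint.pow n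
  -- finrank of E divides p
  have hdeg : Module.finrank ℚ (ℚ⟮α ^ n⟯ : IntermediateField ℚ ℝ)
      = (minpoly ℚ (α ^ n)).natDegree := IntermediateField.adjoin.finrank hαnint
  have hdvd : Module.finrank ℚ (ℚ⟮α ^ n⟯ : IntermediateField ℚ ℝ) ∣ p := by
    rw [hdeg]
    have hx : (minpoly ℚ ((⟨α ^ n, hmemF⟩ : (ℚ⟮α⟯ : IntermediateField ℚ ℝ)))).natDegree ∣
        Module.finrank ℚ (ℚ⟮α⟯ : IntermediateField ℚ ℝ) :=
      minpoly.degree_dvd (IsIntegral.of_finite ℚ _)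
    rw [hfr] at hx
    have : minpoly ℚ ((⟨α ^ n, hmemF⟩ : (ℚ⟮α⟯ : IntermediateField ℚ ℝ))) = minpoly ℚ (α ^ n) := by
      have := minpoly.algebraMap_eq (A := ℚ)
        (algebraMap (ℚ⟮α⟯ : IntermediateField ℚ ℝ) ℝ).injective
        (⟨α ^ n, hmemF⟩ : (ℚ⟮α⟯ : IntermediateField ℚ ℝ))
      simpa using this.symm
    rwa [this] at hx
  rcases (Nat.Prime.eq_one_or_self_of_dvd hp _ hdvd) with h1 | hP
  · -- degree 1: α^n rational, contradiction
    exfalso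
    rw [IntermediateField.finrank_eq_one_iff] at h1
    have : α ^ n ∈ (⊥ : IntermediateField ℚ ℝ) := by
      rw [← h1]; exact mem_adjoin_simple_self ℚ (α ^ n)
    rw [IntermediateField.mem_bot] at this
    obtain ⟨q, hq⟩ := this
    exact key p hp β hβpos hβp α hα hαint hfr n hn q hq.symm
  · haveI : FiniteDimensional ℚ (ℚ⟮α ^ n⟯ : IntermediateField ℚ ℝ) :=
      IntermediateField.adjoin.finiteDimensional hαnint
    have heq : (ℚ⟮α ^ n⟯ : IntermediateField ℚ ℝ) = ℚ⟮α⟯ :=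
      IntermediateField.eq_of_le_of_finrank_eq hle (by rw [hP, hfr])
    exact ⟨heq, hP⟩
end

section
/- Let 𝓕 be a finite set of nonzero polynomials with rational coefficients, and let ℚ(𝓡_𝓕) denote the subfield of the algebraic closure ℚ̄ of ℚ generated over ℚ by all roots of all polynomials in 𝓕. Then ℚ(𝓡_𝓕) has property P, i.e., there exists an algebraic number α such that αⁿ ∉ ℚ(𝓡_𝓕) for all integers n ≥ 1. -/
open Polynomial IntermediateField

lemma no_rat_pow_eq_two {p : ℕ} (hp : 1 < p) : ∀ b : ℚ, b ^ p ≠ 2 := by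
  intro b hb
  haveI : Fact (Nat.Prime 2) := ⟨by norm_num⟩
  have hb0 : b ≠ 0 := by
    intro h; rw [h] at hb; simp [zero_pow (by omega : p ≠ 0)] at hb
  have h1 : padicValRat 2 (b ^ p) = p * padicValRat 2 b := padicValRat.pow b
  have h2 : padicValRat 2 (2 : ℚ) = 1 := by
    have := padicValRat.self (p := 2) one_lt_two
    simpa using this
  rw [hb, h2] at h1
  have : (p : ℤ) ∣ 1 := ⟨padicValRat 2 b, h1⟩
  have := Int.le_of_dvd one_pos this
  omega

lemma complex_contradiction {p n : ℕ} (hp : 1 < p) (hn : 1 ≤ n) (q : ℚ)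
    (hdvd : (X ^ p - C (2 : ℚ)) ∣ ((1 + X) ^ n - C q)) : False := by
  obtain ⟨g, hg⟩ := hdvd
  -- evaluate at complex p-th roots of 2
  have key : ∀ w : ℂ, w ^ p = 2 → (1 + w) ^ n = (q : ℂ) := by
    intro w hw
    have h1 : (aeval w) (X ^ p - C (2 : ℚ)) = 0 := by
      simp [hw]
    have h2 : (aeval w) ((1 + X : ℚ[X]) ^ n - C q) = 0 := by
      rw [hg, map_mul, h1, zero_mul]
    simpa [sub_eq_zero] using h2
  set t : ℝ := (2 : ℝ) ^ ((p : ℝ)⁻¹) with ht_def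
  have hp0 : p ≠ 0 := by omega
  have htp : t ^ p = 2 := Real.rpow_inv_natCast_pow (by norm_num) hp0
  have ht : 0 < t := Real.rpow_pos_of_pos (by norm_num) _
  -- the real root
  have h1 : ((1 : ℂ) + (t : ℂ)) ^ n = (q : ℂ) := key _ (by
    rw [← Complex.ofReal_pow, htp]; norm_num)
  have hreal : (1 + t) ^ n = (q : ℝ) := by exact_mod_cast h1
  -- a non-real root
  set θ : ℝ := 2 * Real.pi / p with hθ_def
  set ζ : ℂ := Complex.exp (θ * Complex.I) with hζ_def
  have hζp : ζ ^ p = 1 := by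
    rw [hζ_def, ← Complex.exp_nat_mul]
    have : (p : ℂ) * ((θ : ℝ) * Complex.I) = 2 * Real.pi * Complex.I := by
      have hpc : (p : ℂ) ≠ 0 := Nat.cast_ne_zero.mpr hp0
      rw [hθ_def]
      push_cast
      field_simp
    rw [this, Complex.exp_two_pi_mul_I]
  have h2 : ((1 : ℂ) + (t : ℂ) * ζ) ^ n = (q : ℂ) := key _ (by
    rw [mul_pow, hζp, mul_one, ← Complex.ofReal_pow, htp]; norm_num)
  -- compare absolute values
  have habs : ‖(1 + (t : ℂ) * ζ)‖ = 1 + t := by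
    have ha : ‖(1 + (t : ℂ) * ζ)‖ ^ n = (1 + t) ^ n := by
      rw [← norm_pow, h2]
      have hq' : ‖(q : ℂ)‖ = |(q : ℝ)| := by
        exact Complex.norm_ratCast q
      rw [hq', ← hreal, abs_of_nonneg (pow_nonneg (by linarith) n)]
    exact (pow_left_strictMonoOn₀ (by omega : n ≠ 0)).injOn
      (Set.mem_Ici.2 (norm_nonneg _)) (Set.mem_Ici.2 (by linarith)) ha
  have hnormSq : Complex.normSq (1 + (t : ℂ) * ζ) = (1 + t) ^ 2 := by
    rw [← Complex.sq_norm, habs]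
  have hζ : ζ = (Real.cos θ : ℂ) + (Real.sin θ : ℂ) * Complex.I := by
    rw [hζ_def, Complex.exp_mul_I, Complex.ofReal_cos, Complex.ofReal_sin]
  have hrw : (1 : ℂ) + (t : ℂ) * ζ =
      ((1 + t * Real.cos θ : ℝ) : ℂ) + ((t * Real.sin θ : ℝ) : ℂ) * Complex.I := by
    rw [hζ]; push_cast; ring
  rw [hrw, Complex.normSq_add_mul_I] at hnormSq
  -- cos θ < 1
  have hpi := Real.pi_pos
  have hθpos : 0 < θ := by
    rw [hθ_def]; positivity
  have hθlt : θ < 2 * Real.pi := by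
    rw [hθ_def]
    rw [div_lt_iff₀ (by exact_mod_cast Nat.pos_of_ne_zero hp0)]
    have : (1 : ℝ) < p := by exact_mod_cast hp
    nlinarith
  have hcos : Real.cos θ < 1 := by
    rcases lt_or_eq_of_le (Real.cos_le_one θ) with h | h
    · exact h
    · exfalso
      have := (Real.cos_eq_one_iff_of_lt_of_lt (by linarith) hθlt).mp h
      linarith
  nlinarith [Real.sin_sq_add_cos_sq θ, mul_pos ht (sub_pos.mpr hcos)]

/-- If `𝓕` is a finite set of nonzero rational polynomials, then the subfield of `ℚ̄`
generated over `ℚ` by all roots of polynomials in `𝓕` has property P: there is an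
algebraic number `α` with `αⁿ` outside this field for all `n ≥ 1`. -/
theorem stmt_2 (𝓕 : Finset ℚ[X]) (h𝓕 : ∀ P ∈ 𝓕, P ≠ 0) :
    ∃ α : AlgebraicClosure ℚ, ∀ n : ℕ, 1 ≤ n →
      α ^ n ∉ IntermediateField.adjoin ℚ
        {x : AlgebraicClosure ℚ | ∃ P ∈ 𝓕, aeval x P = 0} := by
  set S : Set (AlgebraicClosure ℚ) := {x : AlgebraicClosure ℚ | ∃ P ∈ 𝓕, aeval x P = 0} with hS_def
  set K := IntermediateField.adjoin ℚ S with hK_def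
  -- K is finite dimensional
  have hSfin : S.Finite := by
    have : S = ⋃ P ∈ 𝓕, P.rootSet (AlgebraicClosure ℚ) := by
      ext x
      simp only [hS_def, Set.mem_setOf_eq, Set.mem_iUnion, Polynomial.mem_rootSet]
      constructor
      · rintro ⟨P, hP, hx⟩; exact ⟨P, hP, h𝓕 P hP, hx⟩
      · rintro ⟨P, hP, _, hx⟩; exact ⟨P, hP, hx⟩
    rw [this]
    exact Set.Finite.biUnion 𝓕.finite_toSet (fun P _ => P.rootSet_finite _)
  haveI : Finite S := hSfin.to_subtype
  haveI hKfd : FiniteDimensional ℚ K :=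
    IntermediateField.finiteDimensional_adjoin
      (fun x hx => by
        rw [hS_def] at hx; obtain ⟨P, hP, hx⟩ := hx
        exact (show IsAlgebraic ℚ x from ⟨P, h𝓕 P hP, hx⟩).isIntegral)
  set d := Module.finrank ℚ K with hd_def
  have hd1 : 1 ≤ d := by
    have : 0 < Module.finrank ℚ (↥K) := Module.finrank_pos
    omega
  -- choose a prime p > d
  obtain ⟨p, hpd, hp⟩ := Nat.exists_infinite_primes (d + 1)
  have hp1 : 1 < p := hp.one_lt
  -- β a p-th root of 2
  obtain ⟨β, hβ⟩ := IsAlgClosed.exists_pow_nat_eq (2 : AlgebraicClosure ℚ) (by omega : 0 < p)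
  have hirr : Irreducible (X ^ p - C (2 : ℚ)) :=
    X_pow_sub_C_irreducible_of_prime hp (no_rat_pow_eq_two hp1)
  have hmin : minpoly ℚ β = X ^ p - C (2 : ℚ) := by
    refine (minpoly.eq_of_irreducible_of_monic hirr ?_
      (monic_X_pow_sub_C (2 : ℚ) (show p ≠ 0 by omega))).symm
    rw [map_sub, map_pow, aeval_X, aeval_C, hβ]
    norm_num
  refine ⟨1 + β, fun n hn hmem => ?_⟩
  set α := 1 + β with hα_def
  set F := ℚ⟮β⟯ with hF_def
  have hβF : β ∈ F := IntermediateField.mem_adjoin_simple_self ℚ β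
  have hαF : α ∈ F := add_mem (one_mem _) hβF
  have hFrank : Module.finrank ℚ F = p := by
    rw [hF_def, IntermediateField.adjoin.finrank (show IsAlgebraic ℚ β from ⟨_, hirr.ne_zero, by
      rw [map_sub, map_pow, aeval_X, aeval_C, hβ]; norm_num⟩).isIntegral, hmin,
      natDegree_X_pow_sub_C]
  set E := ℚ⟮α ^ n⟯ with hE_def
  have hEF : E ≤ F := by
    rw [hE_def, IntermediateField.adjoin_le_iff]
    rintro x hx
    simp only [Set.mem_singleton_iff] at hx
    subst hx
    exact pow_mem hαF n
  have hEK : E ≤ K := by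
    rw [hE_def, IntermediateField.adjoin_le_iff]
    rintro x hx
    simp only [Set.mem_singleton_iff] at hx
    subst hx
    exact hmem
  -- finrank of E divides p and divides d
  have hdvd1 : Module.finrank ℚ E ∣ p := by
    have h := IntermediateField.relfinrank_mul_relfinrank (bot_le : ⊥ ≤ E) hEF
    rw [IntermediateField.relfinrank_bot_left, IntermediateField.relfinrank_bot_left,
      hFrank] at h
    exact ⟨_, h.symm⟩
  have hdvd2 : Module.finrank ℚ E ∣ d := by
    have h := IntermediateField.relfinrank_mul_relfinrank (bot_le : ⊥ ≤ E) hEK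
    rw [IntermediateField.relfinrank_bot_left, IntermediateField.relfinrank_bot_left] at h
    exact ⟨_, h.symm⟩
  have hErank : Module.finrank ℚ E = 1 := by
    rcases (Nat.Prime.eq_one_or_self_of_dvd hp _ hdvd1) with h | h
    · exact h
    · exfalso
      have := Nat.le_of_dvd (by omega) hdvd2
      omega
  have hEbot : E = ⊥ := IntermediateField.finrank_eq_one_iff.mp hErank
  have hαn : α ^ n ∈ E := IntermediateField.mem_adjoin_simple_self ℚ (α ^ n)
  rw [hEbot, IntermediateField.mem_bot] at hαn
  obtain ⟨q, hq⟩ := hαn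
  -- β is a root of (1+X)^n - C q
  have hroot : (aeval β) ((1 + X : ℚ[X]) ^ n - C q) = 0 := by
    rw [map_sub, map_pow, map_add, aeval_one, aeval_X, aeval_C, ← hα_def, hq, sub_self]
  have hdvd : (X ^ p - C (2 : ℚ)) ∣ ((1 + X) ^ n - C q) := by
    rw [← hmin]
    exact minpoly.dvd ℚ β hroot
  exact complex_contradiction hp1 hn q hdvd
end

section
/- Let k be a positive integer and let 𝓕 = {P ∈ ℚ[x] : P nonzero and deg P ≤ k}. Then the field ℚ(𝓡_𝓕), the subfield of ℚ̄ generated over ℚ by all roots of all nonzero rational polynomials of degree at most k, has property P: there exists α ∈ ℚ̄ such that αⁿ ∉ ℚ(𝓡_𝓕) for all integers n ≥ 1. -/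
open Polynomial IntermediateField Module

/-- There is no rational `ℓ`-th root of 2 when `ℓ ≥ 2`. -/
lemma aux_no_rat_root {ℓ : ℕ} (hl : 2 ≤ ℓ) (b : ℚ) : b ^ ℓ ≠ 2 := by
  intro h
  have hb : b ≠ 0 := by
    rintro rfl
    rw [zero_pow (by omega)] at h
    norm_num at h
  have h1 : padicValRat 2 (b ^ ℓ) = (ℓ : ℤ) * padicValRat 2 b :=
    padicValRat.pow b
  have h2 : padicValRat 2 (2 : ℚ) = 1 := by
    simpa using padicValRat.self (p := 2) (by norm_num)
  rw [h, h2] at h1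
  have hdvd : (ℓ : ℤ) ∣ 1 := Dvd.intro _ h1.symm
  have := Int.le_of_dvd one_pos hdvd
  omega

/-- The compositum of a finite set of elements of degree ≤ k has positive finrank and
all prime factors of its finrank are ≤ k. -/
lemma aux_prime_factors (k : ℕ) (T : Finset (AlgebraicClosure ℚ))
    (hT : ∀ a ∈ T, (minpoly ℚ a).natDegree ≤ k) :
    0 < finrank ℚ (adjoin ℚ (T : Set (AlgebraicClosure ℚ))) ∧
      ∀ q : ℕ, q.Prime → q ∣ finrank ℚ (adjoin ℚ (T : Set (AlgebraicClosure ℚ))) → q ≤ k := by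
  classical
  induction T using Finset.induction_on with
  | empty =>
      rw [Finset.coe_empty, IntermediateField.adjoin_empty]
      constructor
      · rw [IntermediateField.finrank_bot]
        norm_num
      · intro q hq hdvd
        rw [IntermediateField.finrank_bot] at hdvd
        exact absurd (Nat.eq_one_of_dvd_one hdvd) hq.ne_one
  | @insert a T ha ih =>
      obtain ⟨ihpos, ihprime⟩ := ih (fun x hx => hT x (Finset.mem_insert_of_mem hx))
      have hak : (minpoly ℚ a).natDegree ≤ k := hT a (Finset.mem_insert_self a T)
      have hintQ : IsIntegral ℚ a :=
        (AlgebraicClosure.isAlgebraic ℚ).isAlgebraic a |>.isIntegral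
      set F := adjoin ℚ (T : Set (AlgebraicClosure ℚ)) with hF
      have hcoe : ((insert a T : Finset (AlgebraicClosure ℚ)) : Set (AlgebraicClosure ℚ))
          = (T : Set (AlgebraicClosure ℚ)) ∪ {a} := by
        rw [Finset.coe_insert, Set.union_singleton]
      rw [hcoe]
      have hle : F ≤ adjoin ℚ ((T : Set (AlgebraicClosure ℚ)) ∪ {a}) :=
        IntermediateField.adjoin.mono _ _ _ Set.subset_union_left
      have hintF : IsIntegral F a := hintQ.tower_top
      -- the top adjoin over F is F⟮a⟯
      have hadj : adjoin F ((T : Set (AlgebraicClosure ℚ)) ∪ {a}) = F⟮a⟯ := by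
        apply le_antisymm
        · rw [IntermediateField.adjoin_le_iff]
          apply Set.union_subset
          · intro x hx
            have hxF : x ∈ F := IntermediateField.subset_adjoin ℚ _ hx
            exact F⟮a⟯.algebraMap_mem ⟨x, hxF⟩
          · exact IntermediateField.subset_adjoin F _
        · exact IntermediateField.adjoin.mono _ _ _ Set.subset_union_right
      have hrel : relfinrank F (adjoin ℚ ((T : Set (AlgebraicClosure ℚ)) ∪ {a}))
          = (minpoly F a).natDegree := by
        rw [IntermediateField.relfinrank_eq_finrank_of_le hle,
          IntermediateField.extendScalars_adjoin hle, hadj,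
          IntermediateField.adjoin.finrank hintF]
      have hmul : finrank ℚ F * relfinrank F (adjoin ℚ ((T : Set (AlgebraicClosure ℚ)) ∪ {a}))
          = finrank ℚ (adjoin ℚ ((T : Set (AlgebraicClosure ℚ)) ∪ {a})) :=
        IntermediateField.finrank_bot_mul_relfinrank hle
      have hdegpos : 0 < (minpoly F a).natDegree := minpoly.natDegree_pos hintF
      have hdegle : (minpoly F a).natDegree ≤ k := by
        have hdvd : minpoly F a ∣ (minpoly ℚ a).map (algebraMap ℚ F) :=
          minpoly.dvd_map_of_isScalarTower ℚ F a
        have hne : (minpoly ℚ a).map (algebraMap ℚ F) ≠ 0 :=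
          (Polynomial.map_ne_zero_iff (algebraMap ℚ F).injective).mpr
            (minpoly.ne_zero hintQ)
        calc (minpoly F a).natDegree ≤ ((minpoly ℚ a).map (algebraMap ℚ F)).natDegree :=
              Polynomial.natDegree_le_of_dvd hdvd hne
          _ = (minpoly ℚ a).natDegree := Polynomial.natDegree_map _
          _ ≤ k := hak
      constructor
      · rw [← hmul, hrel]
        exact Nat.mul_pos ihpos hdegpos
      · intro q hq hdvd
        rw [← hmul, hrel] at hdvd
        rcases (Nat.Prime.dvd_mul hq).mp hdvd with h | h
        · exact ihprime q hq h
        · exact le_trans (Nat.le_of_dvd hdegpos h) hdegle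

/-- Let `k ≥ 1` and `𝓕 = {P ∈ ℚ[x] : P ≠ 0, deg P ≤ k}`. Then the subfield of `ℚ̄`
generated over `ℚ` by all roots of all nonzero rational polynomials of degree at most
`k` has property P. -/
theorem stmt_5 (k : ℕ) (hk : 1 ≤ k) :
    ∃ α : AlgebraicClosure ℚ, ∀ n : ℕ, 1 ≤ n →
      α ^ n ∉ IntermediateField.adjoin ℚ
        {x : AlgebraicClosure ℚ | ∃ P : ℚ[X], P ≠ 0 ∧ P.natDegree ≤ k ∧ aeval x P = 0} := by
  classical
  obtain ⟨ℓ, hℓge, hℓp⟩ := Nat.exists_infinite_primes (max (k + 1) 3)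
  have hℓk : k + 1 ≤ ℓ := le_trans (le_max_left _ _) hℓge
  have hℓ3 : 3 ≤ ℓ := le_trans (le_max_right _ _) hℓge
  obtain ⟨θ, hθ⟩ := IsAlgClosed.exists_pow_nat_eq
    (algebraMap ℚ (AlgebraicClosure ℚ) 2) (n := ℓ) (by omega)
  set α : AlgebraicClosure ℚ := θ + 1 with hα
  have hθint : IsIntegral ℚ θ := (AlgebraicClosure.isAlgebraic ℚ).isAlgebraic θ |>.isIntegral
  have hαint : IsIntegral ℚ α := (AlgebraicClosure.isAlgebraic ℚ).isAlgebraic α |>.isIntegral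
  -- minpoly of θ
  have hirr : Irreducible (X ^ ℓ - C (2 : ℚ)) :=
    X_pow_sub_C_irreducible_of_prime hℓp (fun b => aux_no_rat_root (by omega) b)
  have hminθ : minpoly ℚ θ = X ^ ℓ - C (2 : ℚ) := by
    refine (minpoly.eq_of_irreducible_of_monic hirr ?_
      (monic_X_pow_sub_C _ (by omega))).symm
    simp [hθ]
  have hfinθ : finrank ℚ ℚ⟮θ⟯ = ℓ := by
    rw [IntermediateField.adjoin.finrank hθint, hminθ, natDegree_X_pow_sub_C]
  -- ℚ⟮α⟯ = ℚ⟮θ⟯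
  have hfields : ℚ⟮α⟯ = ℚ⟮θ⟯ := by
    apply le_antisymm
    · rw [IntermediateField.adjoin_simple_le_iff]
      exact add_mem (IntermediateField.mem_adjoin_simple_self ℚ θ) (one_mem _)
    · rw [IntermediateField.adjoin_simple_le_iff]
      have := sub_mem (IntermediateField.mem_adjoin_simple_self ℚ α) (one_mem ℚ⟮α⟯)
      simpa [hα] using this
  have hfinα : finrank ℚ ℚ⟮α⟯ = ℓ := by rw [hfields, hfinθ]
  -- α^n is never in ⊥
  have hnotbot : ∀ n : ℕ, 1 ≤ n →
      α ^ n ∉ (⊥ : IntermediateField ℚ (AlgebraicClosure ℚ)) := by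
    intro n hn hbot
    rw [IntermediateField.mem_bot] at hbot
    obtain ⟨q, hq⟩ := hbot
    set m := minpoly ℚ α with hm
    have hmd : m.natDegree = ℓ := by
      rw [hm, ← IntermediateField.adjoin.finrank hαint, hfinα]
    have hm0 : m ≠ 0 := minpoly.ne_zero hαint
    have hdvd1 : m ∣ X ^ n - C q := by
      apply minpoly.dvd
      simp [hq]
    have hdvd2 : m ∣ (X - 1) ^ ℓ - C (2 : ℚ) := by
      apply minpoly.dvd
      have : aeval α ((X - 1) ^ ℓ - C (2 : ℚ)) = (α - 1) ^ ℓ - algebraMap ℚ _ 2 := by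
        simp
      rw [this, hα]
      simp [hθ]
    have hsep : m.Separable := (minpoly.irreducible hαint).separable
    have hsplit : Splits (m.map (algebraMap ℚ ℂ)) := IsAlgClosed.splits _
    have hcard : (m.rootSet ℂ).toFinset.card = ℓ := by
      rw [Set.toFinset_card, card_rootSet_eq_natDegree hsep hsplit, hmd]
    -- properties of roots
    have hprop : ∀ β ∈ m.rootSet ℂ,
        β ^ n = algebraMap ℚ ℂ q ∧ (β - 1) ^ ℓ = 2 := by
      intro β hβ
      have hroot : aeval β m = 0 := (Polynomial.mem_rootSet.mp hβ).2
      constructor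
      · have := aeval_eq_zero_of_dvd_aeval_eq_zero hdvd1 hroot
        simpa [sub_eq_zero] using this
      · have := aeval_eq_zero_of_dvd_aeval_eq_zero hdvd2 hroot
        have h2 : (β - 1) ^ ℓ - algebraMap ℚ ℂ 2 = 0 := by simpa using this
        rw [sub_eq_zero] at h2
        simpa using h2
    -- any two roots are equal or conjugate
    have hpair : ∀ β ∈ m.rootSet ℂ, ∀ γ ∈ m.rootSet ℂ,
        β = γ ∨ β = (starRingEnd ℂ) γ := by
      intro β hβ γ hγ
      obtain ⟨hβ1, hβ2⟩ := hprop β hβ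
      obtain ⟨hγ1, hγ2⟩ := hprop γ hγ
      have habs1 : ‖β‖ = ‖γ‖ := by
        have : ‖β‖ ^ n = ‖γ‖ ^ n := by
          rw [← norm_pow, ← norm_pow, hβ1, hγ1]
        exact (pow_left_inj₀ (norm_nonneg _) (norm_nonneg _)
          (by omega)).mp this
      have habs2 : ‖β - 1‖ = ‖γ - 1‖ := by
        have : ‖β - 1‖ ^ ℓ = ‖γ - 1‖ ^ ℓ := by
          rw [← norm_pow, ← norm_pow, hβ2, hγ2]
        exact (pow_left_inj₀ (norm_nonneg _) (norm_nonneg _)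
          (by omega)).mp this
      have hn1 : Complex.normSq β = Complex.normSq γ := by
        rw [← Complex.sq_norm, ← Complex.sq_norm, habs1]
      have hn2 : Complex.normSq (β - 1) = Complex.normSq (γ - 1) := by
        rw [← Complex.sq_norm, ← Complex.sq_norm, habs2]
      simp only [Complex.normSq_apply, Complex.sub_re, Complex.sub_im,
        Complex.one_re, Complex.one_im] at hn1 hn2
      have hre : β.re = γ.re := by nlinarith
      have him2 : β.im ^ 2 = γ.im ^ 2 := by nlinarith
      rcases sq_eq_sq_iff_eq_or_eq_neg.mp him2 with h | h
      · left; exact Complex.ext hre h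
      · right
        apply Complex.ext
        · simpa [Complex.conj_re] using hre
        · simpa [Complex.conj_im] using h
    -- contradiction: ≥ 3 roots but at most 2 values
    have hne : (m.rootSet ℂ).toFinset.Nonempty := by
      rw [← Finset.card_pos, hcard]; omega
    obtain ⟨β₀, hβ₀⟩ := hne
    have hβ₀' : β₀ ∈ m.rootSet ℂ := Set.mem_toFinset.mp hβ₀
    have hsub : (m.rootSet ℂ).toFinset ⊆ {β₀, (starRingEnd ℂ) β₀} := by
      intro β hβ
      rcases hpair β (Set.mem_toFinset.mp hβ) β₀ hβ₀' with h | h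
      · simp [h]
      · simp [h]
    have := Finset.card_le_card hsub
    rw [hcard] at this
    have h2 : ({β₀, (starRingEnd ℂ) β₀} : Finset ℂ).card ≤ 2 :=
      Finset.card_insert_le _ _ |>.trans (by simp)
    omega
  refine ⟨α, ?_⟩
  intro n hn hmem
  obtain ⟨T, hTS, hxT⟩ := IntermediateField.exists_finset_of_mem_adjoin hmem
  have hT : ∀ a ∈ T, (minpoly ℚ a).natDegree ≤ k := by
    intro a haT
    obtain ⟨P, hP0, hPdeg, hPa⟩ := hTS haT
    have hdvd : minpoly ℚ a ∣ P := minpoly.dvd ℚ a hPa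
    exact le_trans (Polynomial.natDegree_le_of_dvd hdvd hP0) hPdeg
  obtain ⟨hpos, hprimes⟩ := aux_prime_factors k T hT
  -- finrank of ℚ⟮α^n⟯ is ℓ
  have hle2 : ℚ⟮α ^ n⟯ ≤ ℚ⟮α⟯ := by
    rw [IntermediateField.adjoin_simple_le_iff]
    exact pow_mem (IntermediateField.mem_adjoin_simple_self ℚ α) n
  have hdvdℓ : finrank ℚ ℚ⟮α ^ n⟯ ∣ ℓ := by
    rw [← hfinα]
    exact Dvd.intro _ (IntermediateField.finrank_bot_mul_relfinrank hle2)
  have hfr : finrank ℚ ℚ⟮α ^ n⟯ = ℓ := by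
    rcases (Nat.Prime.eq_one_or_self_of_dvd hℓp _ hdvdℓ) with h | h
    · exfalso
      apply hnotbot n hn
      exact IntermediateField.finrank_adjoin_simple_eq_one_iff.mp h
    · exact h
  have hle3 : ℚ⟮α ^ n⟯ ≤ adjoin ℚ (T : Set (AlgebraicClosure ℚ)) :=
    IntermediateField.adjoin_simple_le_iff.mpr hxT
  have hdvdT : finrank ℚ ℚ⟮α ^ n⟯ ∣ finrank ℚ (adjoin ℚ (T : Set (AlgebraicClosure ℚ))) :=
    Dvd.intro _ (IntermediateField.finrank_bot_mul_relfinrank hle3)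
  rw [hfr] at hdvdT
  have := hprimes ℓ hℓp hdvdT
  omega
end

section
/- Let 𝓕 be a family of nonzero polynomials with rational coefficients and suppose there exists a subfamily 𝓖 ⊆ 𝓕 such that 1 < [ℚ(𝓡_𝓕) : ℚ(𝓡_𝓖)] < ∞, i.e., ℚ(𝓡_𝓕) is a finite proper extension of ℚ(𝓡_𝓖). Then ℚ(𝓡_𝓕) has property P: there exists α ∈ ℚ̄ such that αⁿ ∉ ℚ(𝓡_𝓕) for all integers n ≥ 1. -/
open Polynomial IntermediateField

noncomputable section

private abbrev Qb := AlgebraicClosure ℚ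

theorem exists_algEquiv_of_aeval_minpoly (F : Type) [Field F] [Algebra F Qb]
    [Algebra.IsAlgebraic F Qb] (x y : Qb) (hy : aeval y (minpoly F x) = 0) :
    ∃ g : Qb ≃ₐ[F] Qb, g x = y := by
  obtain ⟨φ, hφ⟩ := IntermediateField.exists_algHom_of_splits_of_aeval
    (K := Qb) (F := F) (E := Qb)
    (fun z => ⟨Algebra.IsIntegral.isIntegral z, IsAlgClosed.splits _⟩) hy
  exact ⟨AlgEquiv.ofBijective φ (Algebra.IsAlgebraic.algHom_bijective φ), hφ⟩

lemma fourth_roots {i u : Qb} (hi : i ^ 2 = -1) (hu : u ^ 4 = 1) :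
    u = 1 ∨ u = -1 ∨ u = i ∨ u = -i := by
  have h : (u - 1) * ((u + 1) * ((u - i) * (u + i))) = 0 := by
    linear_combination hu - (u ^ 2 - 1) * hi
  rcases mul_eq_zero.mp h with h1 | h
  · exact Or.inl (by linear_combination h1)
  rcases mul_eq_zero.mp h with h1 | h
  · exact Or.inr (Or.inl (by linear_combination h1))
  rcases mul_eq_zero.mp h with h1 | h1
  · exact Or.inr (Or.inr (Or.inl (by linear_combination h1)))
  · exact Or.inr (Or.inr (Or.inr (by linear_combination h1)))

lemma sigma_i_cases (F : Type) [Field F] [Algebra F Qb] (σ : Qb ≃ₐ[F] Qb)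
    {i : Qb} (hi : i ^ 2 = -1) : σ i = i ∨ σ i = -i := by
  have h : (σ i - i) * (σ i + i) = 0 := by
    have hsq : (σ i) ^ 2 = -1 := by rw [← map_pow, hi]; simp
    linear_combination hsq - hi
  rcases mul_eq_zero.mp h with h1 | h1
  · exact Or.inl (by linear_combination h1)
  · exact Or.inr (by linear_combination h1)

lemma square_fixes_i (F : Type) [Field F] [Algebra F Qb] (σ : Qb ≃ₐ[F] Qb)
    {i : Qb} (hi : i ^ 2 = -1) : σ (σ i) = i := by
  rcases sigma_i_cases F σ hi with h | h
  · rw [h, h]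
  · rw [h, map_neg, h, neg_neg]

lemma as2 (F : Type) [Field F] [Algebra F Qb] (σ : Qb ≃ₐ[F] Qb)
    (h2 : σ * σ = 1) (hσ : σ ≠ 1) {i : Qb} (hi : i ^ 2 = -1) (hfix : σ i = i) : False := by
  obtain ⟨x, hx⟩ : ∃ x, σ x ≠ x := by
    by_contra h; push_neg at h; exact hσ (AlgEquiv.ext h)
  have hσσ : ∀ z, σ (σ z) = z := by
    intro z
    have := DFunLike.congr_fun h2 z
    simpa [AlgEquiv.mul_apply] using this
  set y := x - σ x with hy
  have hy0 : y ≠ 0 := sub_ne_zero.mpr (Ne.symm hx)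
  have hσy : σ y = -y := by
    rw [hy, map_sub, hσσ]; ring
  obtain ⟨w, hw⟩ := IsAlgClosed.exists_pow_nat_eq y (n := 2) (by norm_num)
  have hw0 : w ≠ 0 := by
    intro h0; rw [h0] at hw; exact hy0 (by simpa using hw.symm)
  have h1 : (σ w) ^ 2 = -y := by rw [← map_pow, hw, hσy]
  have hc : (σ w - i * w) * (σ w + i * w) = 0 := by
    linear_combination h1 - w ^ 2 * hi + hw
  have hfin : ∀ c : Qb, σ w = c * w → σ c = c → c ^ 2 = -1 → False := by
    intro c hcw hcfix hc2
    have h3 : w = c * (c * w) := by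
      conv_lhs => rw [← hσσ w, hcw, map_mul, hcfix, hcw]
    have h4 : (2 : Qb) * w = 0 := by linear_combination h3 + w * hc2
    rcases mul_eq_zero.mp h4 with h5 | h5
    · norm_num at h5
    · exact hw0 h5
  rcases mul_eq_zero.mp hc with h6 | h6
  · exact hfin i (by linear_combination h6) hfix hi
  · exact hfin (-i) (by linear_combination h6) (by rw [map_neg, hfix]) (by rw [neg_sq]; exact hi)

lemma exists_primroot (p : ℕ) (hp : 0 < p) : ∃ ζ : Qb, IsPrimitiveRoot ζ p := by
  haveI : NeZero ((p : ℕ) : Qb) := ⟨by exact_mod_cast hp.ne'⟩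
  have hdeg : (cyclotomic p Qb).degree ≠ 0 := by
    rw [degree_cyclotomic]
    exact_mod_cast (Nat.totient_pos.mpr hp).ne'
  obtain ⟨ζ, hζ⟩ := IsAlgClosed.exists_root _ hdeg
  exact ⟨ζ, isRoot_cyclotomic_iff.mp hζ⟩

lemma as1 (F : Type) [Field F] [Algebra F Qb] (p : ℕ) (hp : p.Prime) (hodd : Odd p)
    (σ : Qb ≃ₐ[F] Qb) (hσp : σ ^ p = 1) : σ = 1 := by
  by_contra hσ
  haveI : Fact p.Prime := ⟨hp⟩
  haveI : NeZero p := ⟨hp.pos.ne'⟩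
  obtain ⟨ζ, hζ⟩ := exists_primroot p hp.pos
  have hζp : ζ ^ p = 1 := hζ.pow_eq_one
  have hζ0 : ζ ≠ 0 := hζ.ne_zero hp.pos.ne'
  have happly : ∀ (k : ℕ) (z : Qb), (σ ^ (k + 1)) z = σ ((σ ^ k) z) := by
    intro k z; rw [pow_succ']; rfl
  have hσσp : ∀ z, (σ ^ p) z = z := fun z => by rw [hσp]; rfl
  have hord : orderOf σ = p := orderOf_eq_prime hσp hσ
  have hfixζ : σ ζ = ζ := by
    have h1 : (σ ζ) ^ p = 1 := by rw [← map_pow, hζp, map_one]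
    obtain ⟨j, hj, hjz⟩ := hζ.eq_pow_of_pow_eq_one h1
    have hiter : ∀ m, (σ ^ m) ζ = ζ ^ j ^ m := by
      intro m; induction m with
      | zero => simp
      | succ k ih =>
        rw [happly, ih, map_pow, ← hjz, ← pow_mul, pow_succ, mul_comm (j ^ k) j, pow_mul]
    have hpowmod : ∀ a : ℕ, ζ ^ a = ζ ^ (a % p) := by
      intro a
      conv_lhs => rw [← Nat.div_add_mod a p]
      rw [pow_add, pow_mul, hζp, one_pow, one_mul]
    have hmod : j ^ p ≡ 1 [MOD p] := by
      have h2 : ζ ^ j ^ p = ζ ^ 1 := by rw [← hiter p, hσσp ζ, pow_one]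
      exact hζ.pow_inj (Nat.mod_lt _ hp.pos) (Nat.mod_lt _ hp.pos)
        (by rw [← hpowmod, ← hpowmod]; exact h2)
    have hj1 : j ≡ 1 [MOD p] := by
      have hz : ((j : ZMod p)) ^ p = (1 : ZMod p) := by
        have h4 := (ZMod.natCast_eq_natCast_iff _ _ _).mpr hmod
        push_cast at h4; exact h4
      rw [ZMod.pow_card] at hz
      exact (ZMod.natCast_eq_natCast_iff _ _ _).mp (by exact_mod_cast hz)
    have h5 : ζ ^ j = ζ ^ 1 := by rw [hpowmod j, hj1, ← hpowmod 1]
    rw [← hjz, h5, pow_one]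
  have hfixroot : ∀ u : Qb, u ^ p = 1 → σ u = u := by
    intro u hu
    obtain ⟨j, hj, hjz⟩ := hζ.eq_pow_of_pow_eq_one hu
    rw [← hjz, map_pow, hfixζ]
  obtain ⟨x, hx⟩ : ∃ x : Qb, ∑ k ∈ Finset.range p, ζ ^ k * (σ ^ k) x ≠ 0 := by
    by_contra h; push_neg at h
    have hinj : Function.Injective
        (fun k : Fin p => ((σ ^ (k : ℕ)).toAlgHom.toRingHom.toMonoidHom : Qb →* Qb)) := by
      intro a b hab
      have he : (σ ^ (a : ℕ)) = (σ ^ (b : ℕ)) :=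
        AlgEquiv.ext fun z => DFunLike.congr_fun hab z
      exact Fin.ext (pow_injOn_Iio_orderOf (x := σ)
        (by rw [hord]; exact a.2) (by rw [hord]; exact b.2) he)
    have hli := (linearIndependent_monoidHom Qb Qb).comp _ hinj
    rw [Fintype.linearIndependent_iff] at hli
    have h0 := hli (fun k => ζ ^ (k : ℕ)) ?_ ⟨0, hp.pos⟩
    · simp at h0
    · funext z
      have hz := h z
      rw [← Fin.sum_univ_eq_sum_range (fun k => ζ ^ k * (σ ^ k) z) p] at hz
      simpa [Function.comp, Finset.sum_apply, Pi.smul_apply, smul_eq_mul] using hz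
  set y := ∑ k ∈ Finset.range p, ζ ^ k * (σ ^ k) x with hydef
  have hσy : ζ * σ y = y := by
    rw [hydef, map_sum, Finset.mul_sum]
    have hterm : ∀ k ∈ Finset.range p,
        ζ * σ (ζ ^ k * (σ ^ k) x) = ζ ^ (k + 1) * (σ ^ (k + 1)) x := by
      intro k _
      rw [map_mul, map_pow, hfixζ, happly]; ring
    rw [Finset.sum_congr rfl hterm]
    have h2 := Finset.sum_range_succ' (fun k => ζ ^ k * (σ ^ k) x) p
    have h3 := Finset.sum_range_succ (fun k => ζ ^ k * (σ ^ k) x) p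
    have h4 : ζ ^ p * (σ ^ p) x = ζ ^ 0 * (σ ^ 0) x := by
      rw [hζp, hσσp x]; simp
    linear_combination h3 - h2 + h4
  have hy0 : y ≠ 0 := hx
  obtain ⟨w, hw⟩ := IsAlgClosed.exists_pow_nat_eq y (n := p) hp.pos
  have hw0 : w ≠ 0 := by
    intro h0; rw [h0, zero_pow hp.pos.ne'] at hw; exact hy0 hw.symm
  have hσw0 : σ w ≠ 0 := fun h0 => hw0 (σ.injective (h0.trans (map_zero σ).symm))
  set η := σ w / w with hη
  have hσw : σ w = η * w := by rw [hη]; field_simp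
  have hη0 : η ≠ 0 := div_ne_zero hσw0 hw0
  have hηp : η ^ p * y = σ y := by
    rw [hη, div_pow, ← map_pow, hw]; field_simp
  have hηζ : ζ * η ^ p = 1 := by
    have h5 : (ζ * η ^ p - 1) * y = 0 := by linear_combination ζ * hηp + hσy
    rcases mul_eq_zero.mp h5 with h6 | h6
    · linear_combination h6
    · exact absurd h6 hy0
  have hηpval : η ^ p = ζ⁻¹ := by
    field_simp
    linear_combination hηζ
  set δ := σ η / η with hδ
  have hse : σ η = δ * η := by rw [hδ]; field_simp
  have hδp : δ ^ p = 1 := by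
    rw [hδ, div_pow, ← map_pow, hηpval, map_inv₀, hfixζ]
    exact div_self (inv_ne_zero hζ0)
  have hfixδ : σ δ = δ := hfixroot δ hδp
  have hiterη : ∀ m, (σ ^ m) η = η * δ ^ m := by
    intro m; induction m with
    | zero => simp
    | succ k ih =>
      rw [happly, ih, map_mul, map_pow, hfixδ, hse]; ring
  have htel : ∀ m, (σ ^ m) w = w * ∏ k ∈ Finset.range m, (σ ^ k) η := by
    intro m; induction m with
    | zero => simp
    | succ k ih =>
      rw [happly, ih, map_mul, map_prod]
      have hstep : ∀ j ∈ Finset.range k, σ ((σ ^ j) η) = (σ ^ (j + 1)) η :=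
        fun j _ => (happly j η).symm
      rw [Finset.prod_congr rfl hstep, Finset.prod_range_succ' (fun j => (σ ^ j) η) k, hσw]
      simp only [pow_zero, AlgEquiv.one_apply]
      ring
  have hfin1 : ∏ k ∈ Finset.range p, (σ ^ k) η = 1 := by
    have h6 := htel p
    rw [hσσp w] at h6
    have h7 : w * 1 = w * ∏ k ∈ Finset.range p, (σ ^ k) η := by rw [mul_one]; exact h6
    exact (mul_left_cancel₀ hw0 h7).symm
  have hfin2 : ∏ k ∈ Finset.range p, (σ ^ k) η = η ^ p * δ ^ (p * ((p - 1) / 2)) := by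
    rw [Finset.prod_congr rfl (fun k _ => hiterη k), Finset.prod_mul_distrib,
      Finset.prod_const, Finset.card_range, Finset.prod_pow_eq_pow_sum, Finset.sum_range_id]
    congr 1
    rw [Nat.mul_div_assoc p (even_iff_two_dvd.mp (Nat.Odd.sub_odd hodd odd_one))]
  have hδsum : δ ^ (p * ((p - 1) / 2)) = 1 := by rw [pow_mul, hδp, one_pow]
  have hη1 : η ^ p = 1 := by rw [hfin2, hδsum, mul_one] at hfin1; exact hfin1
  have hζ1 : ζ = 1 := by rw [hη1, mul_one] at hηζ; exact hηζ
  exact hζ.ne_one hp.one_lt hζ1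

lemma as_main (F : Type) [Field F] [Algebra F Qb] {i : Qb} (hi : i ^ 2 = -1) :
    ∀ n : ℕ, n ≠ 0 → ∀ σ : Qb ≃ₐ[F] Qb, σ ^ n = 1 → σ * σ = 1 := by
  intro n
  induction n using Nat.strong_induction_on with
  | _ n ih =>
    intro hn σ hσn
    rcases Nat.even_or_odd n with he | ho
    · obtain ⟨m, hm⟩ := he
      have hm0 : m ≠ 0 := by omega
      have hpow : (σ * σ) ^ m = 1 := by
        have h1 : σ ^ (m + m) = 1 := by rw [← hm]; exact hσn
        rw [← sq, ← pow_mul, two_mul]; exact h1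
      have h4 : (σ * σ) * (σ * σ) = 1 := ih m (by omega) hm0 (σ * σ) hpow
      by_contra hne
      refine as2 F (σ * σ) h4 ?_ hi ?_
      · intro hc; exact hne hc
      · have := square_fixes_i F σ hi
        simpa [AlgEquiv.mul_apply] using this
    · rcases eq_or_ne n 1 with rfl | hn1
      · rw [pow_one] at hσn; rw [hσn]; simp
      · set p := n.minFac with hpdef
        have hp : p.Prime := Nat.minFac_prime hn1
        have hpdvd : p ∣ n := Nat.minFac_dvd n
        have hpodd : Odd p := by
          rcases hp.eq_two_or_odd' with h2 | h
          · exfalso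
            rw [h2] at hpdvd
            exact (Nat.not_even_iff_odd.mpr ho) (even_iff_two_dvd.mpr hpdvd)
          · exact h
        have h1 : σ ^ (n / p) = 1 := by
          apply as1 F p hp hpodd
          rw [← pow_mul, Nat.div_mul_cancel hpdvd]; exact hσn
        exact ih (n / p) (Nat.div_lt_self (by omega) hp.one_lt)
          (Nat.div_pos (Nat.le_of_dvd (by omega) hpdvd) hp.pos).ne' σ h1

lemma minpoly_quad {F : Type} [Field F] [Algebra F Qb] (c : F) (x : Qb)
    (hx : x ^ 2 = algebraMap F Qb c) (hnot : x ∉ Set.range (algebraMap F Qb)) :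
    minpoly F x = X ^ 2 - C c := by
  have hmono : (X ^ 2 - C c : F[X]).Monic := monic_X_pow_sub_C c (by norm_num)
  have haev : aeval x (X ^ 2 - C c : F[X]) = 0 := by simp [hx]
  have hint : IsIntegral F x := ⟨X ^ 2 - C c, hmono, by simpa [aeval_def] using haev⟩
  have hdvd : minpoly F x ∣ X ^ 2 - C c := minpoly.dvd F x haev
  have hne : (X ^ 2 - C c : F[X]) ≠ 0 := hmono.ne_zero
  have hd1 : (minpoly F x).natDegree ≠ 1 := by
    exact fun h => hnot (minpoly.natDegree_eq_one_iff.mp h)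
  have hdle : (minpoly F x).natDegree ≤ 2 := by
    have h1 := natDegree_le_of_dvd hdvd hne
    simpa [natDegree_X_pow_sub_C] using h1
  have hdpos : 0 < (minpoly F x).natDegree := minpoly.natDegree_pos hint
  have hd2 : (minpoly F x).natDegree = 2 := by omega
  obtain ⟨k, hk⟩ := hdvd
  have hk0 : k ≠ 0 := by rintro rfl; rw [mul_zero] at hk; exact hne hk
  have hq0 : minpoly F x ≠ 0 := minpoly.ne_zero hint
  have hkdeg : k.natDegree = 0 := by
    have h2 := natDegree_mul hq0 hk0
    rw [← hk, natDegree_X_pow_sub_C, hd2] at h2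
    omega
  have hkc : k = C (k.coeff 0) := eq_C_of_natDegree_eq_zero hkdeg
  have hlc : k.coeff 0 = 1 := by
    have h1 : (X ^ 2 - C c : F[X]).leadingCoeff = (minpoly F x).leadingCoeff * k.leadingCoeff := by
      rw [hk, leadingCoeff_mul]
    rw [hmono.leadingCoeff, (minpoly.monic hint).leadingCoeff, one_mul] at h1
    rw [leadingCoeff, hkdeg] at h1
    exact h1.symm
  rw [hk, hkc, hlc, map_one, mul_one]

lemma quad_coords {F : Type} [Field F] [Algebra F Qb] (t : Qb) (c : F)
    (hti : IsIntegral F t) (hmin : minpoly F t = X ^ 2 - C c) (b : Qb) (hb : b ∈ F⟮t⟯) :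
    ∃ s u : F, b = algebraMap F Qb s + algebraMap F Qb u * t := by
  have hb2 : b ∈ Algebra.adjoin F {t} := by
    rw [← IntermediateField.adjoin_simple_toSubalgebra_of_isAlgebraic hti.isAlgebraic] at *
    exact (IntermediateField.mem_toSubalgebra _ _).mpr hb
  rw [Algebra.adjoin_singleton_eq_range_aeval] at hb2
  obtain ⟨f, hf0⟩ := hb2
  have hf : aeval t f = b := hf0
  have hmono : (X ^ 2 - C c : F[X]).Monic := monic_X_pow_sub_C c (by norm_num)
  have hmod : aeval t f = aeval t (f %ₘ (X ^ 2 - C c)) := by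
    conv_lhs => rw [← modByMonic_add_div f (X ^ 2 - C c)]
    rw [map_add, map_mul]
    have h0 : aeval t (X ^ 2 - C c : F[X]) = 0 := by rw [← hmin]; exact minpoly.aeval F t
    rw [h0, zero_mul, add_zero]
  have hdeg : (f %ₘ (X ^ 2 - C c)).degree ≤ 1 := by
    have h1 := degree_modByMonic_lt f hmono
    rw [degree_X_pow_sub_C (by norm_num) c] at h1
    exact Order.le_of_lt_succ (by exact_mod_cast h1)
  set r := f %ₘ (X ^ 2 - C c) with hr
  refine ⟨r.coeff 0, r.coeff 1, ?_⟩
  rw [← hf, hmod]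
  conv_lhs => rw [eq_X_add_C_of_degree_le_one hdeg]
  simp only [map_add, map_mul, aeval_C, aeval_X]
  ring

lemma quad_lin_indep {F : Type} [Field F] [Algebra F Qb] (t : Qb)
    (hnot : t ∉ Set.range (algebraMap F Qb)) (A B : F)
    (h : algebraMap F Qb A + algebraMap F Qb B * t = 0) : A = 0 ∧ B = 0 := by
  have hB : B = 0 := by
    by_contra hB0
    apply hnot
    refine ⟨-A / B, ?_⟩
    have hBQ : algebraMap F Qb B ≠ 0 :=
      fun hc => hB0 ((algebraMap F Qb).injective (by rw [hc, map_zero]))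
    rw [map_div₀, map_neg]
    field_simp
    linear_combination -h
  refine ⟨?_, hB⟩
  rw [hB, map_zero, zero_mul, add_zero] at h
  exact (algebraMap F Qb).injective (by rw [h, map_zero])

lemma no_rat_sqrt_two (q : ℚ) : q ^ 2 ≠ 2 := by
  intro h
  have h2 : ((q : ℝ)) ^ 2 = 2 := by exact_mod_cast h
  have h3 : Real.sqrt 2 = |(q : ℝ)| := by rw [← h2, Real.sqrt_sq_eq_abs]
  have h4 : Irrational |(q : ℝ)| := h3 ▸ irrational_sqrt_two
  rw [← Rat.cast_abs] at h4
  exact (Rat.not_irrational _) h4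

lemma qi_not_rat (i : Qb) (hi : i ^ 2 = -1) : i ∉ Set.range (algebraMap ℚ Qb) := by
  rintro ⟨q, hq⟩
  have h1 : algebraMap ℚ Qb (q ^ 2) = algebraMap ℚ Qb (-1) := by
    rw [map_pow, hq, hi]; simp
  have h2 : q ^ 2 = -1 := (algebraMap ℚ Qb).injective h1
  nlinarith [sq_nonneg q]

lemma qi_no_sqrt (i : Qb) (hi : i ^ 2 = -1) :
    ∀ b ∈ ℚ⟮i⟯, b ^ 2 ≠ 2 ∧ b ^ 2 ≠ -2 := by
  have hnoti := qi_not_rat i hi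
  have hminI : minpoly ℚ i = X ^ 2 - C (-1) := minpoly_quad (-1) i (by rw [hi]; simp) hnoti
  have hint : IsIntegral ℚ i := ⟨X ^ 2 - C (-1), monic_X_pow_sub_C _ (by norm_num),
    by simp [eval₂_sub, hi]⟩
  intro b hb
  obtain ⟨A, B, hab⟩ := quad_coords i (-1) hint hminI b hb
  constructor
  · intro h2
    rw [hab] at h2
    have hE : algebraMap ℚ Qb (A ^ 2 - B ^ 2 - 2) + algebraMap ℚ Qb (2 * A * B) * i = 0 := by
      simp only [map_sub, map_mul, map_pow, map_ofNat]
      linear_combination h2 - (algebraMap ℚ Qb B) ^ 2 * hi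
    obtain ⟨h3, h4⟩ := quad_lin_indep i hnoti _ _ hE
    rcases mul_eq_zero.mp h4 with h5 | h5
    · have hA : A = 0 := by
        rcases mul_eq_zero.mp h5 with h6 | h6
        · norm_num at h6
        · exact h6
      rw [hA] at h3
      nlinarith [sq_nonneg B]
    · rw [h5] at h3
      have h7 : A ^ 2 = 2 := by linarith
      exact no_rat_sqrt_two A h7
  · intro h2
    rw [hab] at h2
    have hE : algebraMap ℚ Qb (A ^ 2 - B ^ 2 + 2) + algebraMap ℚ Qb (2 * A * B) * i = 0 := by
      simp only [map_add, map_sub, map_mul, map_pow, map_ofNat]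
      linear_combination h2 - (algebraMap ℚ Qb B) ^ 2 * hi
    obtain ⟨h3, h4⟩ := quad_lin_indep i hnoti _ _ hE
    rcases mul_eq_zero.mp h4 with h5 | h5
    · have hA : A = 0 := by
        rcases mul_eq_zero.mp h5 with h6 | h6
        · norm_num at h6
        · exact h6
      rw [hA] at h3
      have h7 : B ^ 2 = 2 := by linarith
      exact no_rat_sqrt_two B h7
    · rw [h5] at h3
      nlinarith [sq_nonneg A]

lemma k2_no_sqrt (i γ : Qb) (hi : i ^ 2 = -1) (hγ : γ ^ 2 = 2) :
    γ ∉ Set.range (algebraMap ↥(ℚ⟮i⟯) Qb) ∧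
    minpoly ↥(ℚ⟮i⟯) γ = X ^ 2 - C (2 : ↥(ℚ⟮i⟯)) ∧
    ∀ b ∈ IntermediateField.adjoin ↥(ℚ⟮i⟯) {γ}, b ^ 2 ≠ γ := by
  have hqi := qi_no_sqrt i hi
  have hnotγ : γ ∉ Set.range (algebraMap ↥(ℚ⟮i⟯) Qb) := by
    rintro ⟨c, hc⟩
    have hcv : (c : Qb) = γ := hc
    have h1 : (c : Qb) ^ 2 = 2 := by rw [hcv]; exact hγ
    exact (hqi _ c.2).1 h1
  have hg2 : γ ^ 2 = algebraMap ↥(ℚ⟮i⟯) Qb (2 : ↥(ℚ⟮i⟯)) := by rw [map_ofNat]; exact hγ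
  have hminγ : minpoly ↥(ℚ⟮i⟯) γ = X ^ 2 - C (2 : ↥(ℚ⟮i⟯)) := minpoly_quad _ γ hg2 hnotγ
  refine ⟨hnotγ, hminγ, ?_⟩
  intro b hb h2
  have hint : IsIntegral ↥(ℚ⟮i⟯) γ := ⟨X ^ 2 - C (2 : ↥(ℚ⟮i⟯)),
    monic_X_pow_sub_C _ (by norm_num), by simp [eval₂_sub, hg2]⟩
  obtain ⟨S, U, hab⟩ := quad_coords γ (2 : ↥(ℚ⟮i⟯)) hint hminγ b hb
  rw [hab] at h2
  have hE : algebraMap ↥(ℚ⟮i⟯) Qb (S ^ 2 + 2 * U ^ 2) +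
      algebraMap ↥(ℚ⟮i⟯) Qb (2 * S * U - 1) * γ = 0 := by
    simp only [map_add, map_sub, map_mul, map_pow, map_ofNat, map_one]
    linear_combination h2 - (algebraMap ↥(ℚ⟮i⟯) Qb U) ^ 2 * hγ
  obtain ⟨h3, h4⟩ := quad_lin_indep γ hnotγ _ _ hE
  have hU0 : U ≠ 0 := by
    rintro rfl
    simp at h4
  have h5 : (S / U) ^ 2 = (-2 : ↥(ℚ⟮i⟯)) := by
    field_simp
    linear_combination h3
  have hc2 : ((S / U : ↥(ℚ⟮i⟯)) : Qb) ^ 2 = -2 := by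
    have h6 : (((S / U) ^ 2 : ↥(ℚ⟮i⟯)) : Qb) = ((-2 : ↥(ℚ⟮i⟯)) : Qb) := by rw [h5]
    push_cast at h6
    exact h6
  exact (hqi _ (S / U : ↥(ℚ⟮i⟯)).2).2 hc2

set_option maxHeartbeats 2000000 in
lemma not_finite_proper (KG : IntermediateField ℚ Qb)
    (hstab : ∀ (g : Qb ≃ₐ[ℚ] Qb), ∀ x ∈ KG, g x ∈ KG)
    (hne : KG ≠ ⊤) (hfd : FiniteDimensional ↥KG Qb) : False := by
  obtain ⟨i, hi⟩ : ∃ i : Qb, i ^ 2 = -1 :=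
    IsAlgClosed.exists_pow_nat_eq (-1 : Qb) (n := 2) (by norm_num)
  obtain ⟨β, hβ4⟩ : ∃ β : Qb, β ^ 4 = 2 :=
    IsAlgClosed.exists_pow_nat_eq (2 : Qb) (n := 4) (by norm_num)
  set γ := β ^ 2 with hγdef
  have hγ : γ ^ 2 = 2 := by rw [hγdef, ← pow_mul]; exact hβ4
  have hβ0 : β ≠ 0 := by intro h0; rw [h0] at hβ4; norm_num at hβ4
  have hi0 : i ≠ 0 := by intro h0; rw [h0] at hi; norm_num at hi
  haveI : Algebra.IsAlgebraic ↥KG Qb := Algebra.IsAlgebraic.of_finite _ _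
  obtain ⟨x0, hx0⟩ : ∃ x : Qb, x ∉ KG := by
    by_contra h; push_neg at h; exact hne (eq_top_iff.mpr fun z _ => h z)
  have hx0int : IsIntegral ↥KG x0 := Algebra.IsIntegral.isIntegral x0
  have hx0deg : 2 ≤ (minpoly ↥KG x0).natDegree := by
    rw [minpoly.two_le_natDegree_iff hx0int]
    rintro ⟨c, hc⟩
    exact hx0 (hc ▸ c.2)
  have hsep : (minpoly ↥KG x0).Separable := (minpoly.irreducible hx0int).separable
  have hsplit : ((minpoly ↥KG x0).map (algebraMap ↥KG Qb)).Splits := IsAlgClosed.splits _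
  have hcard2 : 1 < Fintype.card ((minpoly ↥KG x0).rootSet Qb) := by
    rw [card_rootSet_eq_natDegree hsep hsplit]; omega
  have hx0mem : x0 ∈ (minpoly ↥KG x0).rootSet Qb :=
    mem_rootSet.mpr ⟨minpoly.ne_zero hx0int, minpoly.aeval _ _⟩
  obtain ⟨y0, hy0ne⟩ := Fintype.exists_ne_of_one_lt_card hcard2
    (⟨x0, hx0mem⟩ : (minpoly ↥KG x0).rootSet Qb)
  obtain ⟨σ, hσx⟩ := exists_algEquiv_of_aeval_minpoly ↥KG x0 y0.1 (mem_rootSet.mp y0.2).2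
  have hσne : σ ≠ 1 := by
    intro h1
    apply hy0ne
    apply Subtype.ext
    rw [← hσx, h1]; rfl
  haveI := AlgEquiv.fintype ↥KG Qb
  have hcardpos : Fintype.card (Qb ≃ₐ[↥KG] Qb) ≠ 0 := Fintype.card_ne_zero
  have horder : ∀ ρ : Qb ≃ₐ[↥KG] Qb, ρ ^ Fintype.card (Qb ≃ₐ[↥KG] Qb) = 1 :=
    fun ρ => pow_card_eq_one
  have hinv : ∀ ρ : Qb ≃ₐ[↥KG] Qb, ρ * ρ = 1 :=
    fun ρ => as_main ↥KG hi _ hcardpos ρ (horder ρ)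
  have hmoves : ∀ ρ : Qb ≃ₐ[↥KG] Qb, ρ ≠ 1 → ρ i = -i := by
    intro ρ hρ
    rcases sigma_i_cases ↥KG ρ hi with h | h
    · exact (as2 ↥KG ρ (hinv ρ) hρ hi h).elim
    · exact h
  have huniq : ∀ ρ₁ ρ₂ : Qb ≃ₐ[↥KG] Qb, ρ₁ ≠ 1 → ρ₂ ≠ 1 → ρ₁ = ρ₂ := by
    intro ρ₁ ρ₂ h1 h2
    by_cases h12 : ρ₁ * ρ₂ = 1
    · have hinv2 : ρ₂⁻¹ = ρ₂ := inv_eq_of_mul_eq_one_right (hinv ρ₂)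
      rw [← hinv2]
      exact eq_inv_of_mul_eq_one_left h12
    · exfalso
      apply as2 ↥KG (ρ₁ * ρ₂) (hinv _) h12 hi
      rw [AlgEquiv.mul_apply, hmoves ρ₂ h2, map_neg, hmoves ρ₁ h1, neg_neg]
  have hσi : σ i = -i := hmoves σ hσne
  -- build the automorphism g with g i = i and g β = i * β
  obtain ⟨hnotγ, hminγ, hK2sq⟩ := k2_no_sqrt i γ hi hγ
  haveI hKialg : Algebra.IsAlgebraic ↥(ℚ⟮i⟯) Qb :=
    haveI : Algebra.IsAlgebraic ℚ Qb := AlgebraicClosure.isAlgebraic ℚ; Algebra.IsAlgebraic.tower_top (K := ℚ) ↥(ℚ⟮i⟯)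
  obtain ⟨g1, hg1⟩ := exists_algEquiv_of_aeval_minpoly ↥(ℚ⟮i⟯) γ (-γ)
    (by rw [hminγ]; simp [hγ, map_ofNat])
  set K2 : IntermediateField ↥(ℚ⟮i⟯) Qb := IntermediateField.adjoin ↥(ℚ⟮i⟯) {γ} with hK2def
  haveI hK2alg : Algebra.IsAlgebraic ↥K2 Qb := Algebra.IsAlgebraic.tower_top (K := ↥(ℚ⟮i⟯)) ↥K2
  have hγK2 : γ ∈ K2 := IntermediateField.mem_adjoin_simple_self _ γ
  set γ2 : ↥K2 := ⟨γ, hγK2⟩ with hγ2def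
  have hβnotK2 : β ∉ Set.range (algebraMap ↥K2 Qb) := by
    rintro ⟨c, hc⟩
    have hcv : (c : Qb) = β := by rwa [IntermediateField.algebraMap_apply] at hc
    exact hK2sq (c : Qb) c.2 (by rw [hcv])
  have hβ2γ : β ^ 2 = algebraMap ↥K2 Qb γ2 := by
    rw [IntermediateField.algebraMap_apply]
  have hminβ : minpoly ↥K2 β = X ^ 2 - C γ2 := minpoly_quad γ2 β hβ2γ hβnotK2
  obtain ⟨h2e, hh2⟩ := exists_algEquiv_of_aeval_minpoly ↥K2 β (-β)
    (by rw [hminβ]; simp [← hβ2γ])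
  have hg1β : g1 β = i * β ∨ g1 β = -(i * β) := by
    have hsq : (g1 β) ^ 2 = -γ := by rw [← map_pow, ← hγdef]; exact hg1
    have hiβ : (i * β) ^ 2 = -γ := by rw [mul_pow, hi, hγdef]; ring
    have hz : (g1 β - i * β) * (g1 β + i * β) = 0 := by linear_combination hsq - hiβ
    rcases mul_eq_zero.mp hz with h | h
    · exact Or.inl (by linear_combination h)
    · exact Or.inr (by linear_combination h)
  obtain ⟨g0, hg0β⟩ : ∃ g0 : Qb ≃ₐ[↥(ℚ⟮i⟯)] Qb, g0 β = i * β := by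
    rcases hg1β with h | h
    · exact ⟨g1, h⟩
    · refine ⟨(AlgEquiv.restrictScalars ↥(ℚ⟮i⟯) h2e).trans g1, ?_⟩
      rw [AlgEquiv.trans_apply, AlgEquiv.restrictScalars_apply, hh2, map_neg, h, neg_neg]
  set g : Qb ≃ₐ[ℚ] Qb := AlgEquiv.restrictScalars ℚ g0 with hgdef
  have hgβ : g β = i * β := hg0β
  have hgi : g i = i := by
    have hiKi : i ∈ ℚ⟮i⟯ := IntermediateField.mem_adjoin_simple_self ℚ i
    exact (by simpa using g0.commutes ⟨i, hiKi⟩ : g0 i = i)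
  -- conjugate σ by g
  have hcommK : ∀ k : ↥KG,
      ((g.toRingEquiv.trans σ.toRingEquiv).trans g.symm.toRingEquiv) (algebraMap ↥KG Qb k)
        = algebraMap ↥KG Qb k := by
    intro k
    have h1 : g (k : Qb) ∈ KG := hstab g _ k.2
    have h2 : σ (g (k : Qb)) = g (k : Qb) := by
      simpa using σ.commutes (⟨g ↑k, h1⟩ : ↥KG)
    show g.symm (σ (g ↑k)) = ↑k
    rw [h2]
    exact g.symm_apply_apply _
  set ρ : Qb ≃ₐ[↥KG] Qb := AlgEquiv.ofRingEquiv hcommK with hρdef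
  have hρapp : ∀ z, ρ z = g.symm (σ (g z)) := fun z => rfl
  have hρne : ρ ≠ 1 := by
    intro h1
    apply hσne
    apply AlgEquiv.ext
    intro z
    have h3 := DFunLike.congr_fun h1 (g.symm z)
    rw [hρapp, g.apply_symm_apply] at h3
    have h4 : g.symm (σ z) = g.symm z := by simpa using h3
    simpa using g.symm.injective h4
  have hρσ : ρ = σ := huniq ρ σ hρne hσne
  have hcommσ : ∀ z, σ (g z) = g (σ z) := by
    intro z
    have h1 : ρ z = σ z := by rw [hρσ]
    rw [hρapp] at h1
    calc σ (g z) = g (g.symm (σ (g z))) := (g.apply_symm_apply _).symm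
    _ = g (σ z) := by rw [h1]
  set u := σ β / β with hu
  have hσβ : σ β = u * β := by rw [hu]; field_simp
  have hu4 : u ^ 4 = 1 := by
    rw [hu, div_pow, ← map_pow, hβ4, map_ofNat]
    norm_num
  have hu0 : u ≠ 0 := by
    intro h0
    rw [h0, zero_mul] at hσβ
    exact hβ0 (σ.injective (hσβ.trans (map_zero σ).symm))
  have hgu : g u = u := by
    rcases fourth_roots hi hu4 with h | h | h | h <;> rw [h] <;> simp [hgi]
  have hfinal : (-i) * (u * β) = u * (i * β) := by
    have h1 := hcommσ β
    rw [hgβ] at h1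
    calc (-i) * (u * β) = σ i * σ β := by rw [hσi, hσβ]
    _ = σ (i * β) := (map_mul σ i β).symm
    _ = g (σ β) := h1
    _ = g (u * β) := by rw [hσβ]
    _ = g u * g β := map_mul g u β
    _ = u * (i * β) := by rw [hgu, hgβ]
  have hzero : i * (u * β) = 0 := by linear_combination (-(1 : Qb) / 2) * hfinal
  rcases mul_eq_zero.mp hzero with h | h
  · exact hi0 h
  · rcases mul_eq_zero.mp h with h' | h'
    · exact hu0 h'
    · exact hβ0 h'

theorem propP_of_ne_top (K : IntermediateField ℚ Qb) (hK : K ≠ ⊤) :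
    ∃ α : Qb, ∀ n : ℕ, 1 ≤ n → α ^ n ∉ K := by
  obtain ⟨β, hβ⟩ : ∃ β : Qb, β ∉ K := by
    by_contra h; push_neg at h; exact hK (eq_top_iff.mpr fun x _ => h x)
  have hint : ∀ z : Qb, IsIntegral ℚ z := fun z =>
    haveI : Algebra.IsAlgebraic ℚ Qb := AlgebraicClosure.isAlgebraic ℚ; Algebra.IsIntegral.isIntegral z
  set R : Set Qb := (minpoly ℚ β).rootSet Qb with hR
  have hRfin : R.Finite := (minpoly ℚ β).rootSet_finite Qb
  set L : IntermediateField ℚ Qb := IntermediateField.adjoin ℚ R with hL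
  haveI : Finite R := hRfin.to_subtype
  haveI hLfd : FiniteDimensional ℚ L :=
    IntermediateField.finiteDimensional_adjoin (fun x _ => hint x)
  haveI : NumberField L := ⟨⟩
  set T : Set L := {z : L | ∃ k, 1 ≤ k ∧ z ^ k = 1} with hTdef
  have hT : T.Finite := by
    refine Set.Finite.subset (NumberField.Embeddings.finite_of_norm_le L ℂ 1) ?_
    rintro z ⟨k, hk1, hzk⟩
    refine ⟨⟨X ^ k - C 1, monic_X_pow_sub_C 1 (by omega), ?_⟩, fun φ => ?_⟩
    · simp [sub_eq_zero, hzk]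
    · have h1 : (φ z) ^ k = 1 := by rw [← map_pow, hzk, map_one]
      have h2 : ‖φ z‖ ^ k = 1 := by rw [← norm_pow, h1, norm_one]
      by_contra hlt
      push_neg at hlt
      have := one_lt_pow₀ (n := k) hlt (by omega)
      rw [h2] at this; exact lt_irrefl 1 this
  set Bad : Set ℕ :=
    ⋃ a ∈ R, ⋃ b ∈ R, ⋃ ζ ∈ T, {N : ℕ | a ≠ b ∧ a + N = (ζ : Qb) * (b + N)} with hBadDef
  have hBadFin : Bad.Finite := by
    refine Set.Finite.biUnion hRfin fun a _ => Set.Finite.biUnion hRfin fun b _ =>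
      Set.Finite.biUnion hT fun ζ _ => Set.Subsingleton.finite ?_
    rintro N ⟨hab, hN⟩ M ⟨-, hM⟩
    have h1 : ((ζ : Qb) - 1) * ((N : Qb) - (M : Qb)) = 0 := by linear_combination hM - hN
    rcases mul_eq_zero.mp h1 with h | h
    · exfalso
      have hz1 : (ζ : Qb) = 1 := by linear_combination h
      rw [hz1, one_mul] at hN
      exact hab (by linear_combination hN)
    · exact_mod_cast Nat.cast_injective (sub_eq_zero.mp h)
  obtain ⟨N, hN⟩ : ∃ N : ℕ, N ∉ Bad := (hBadFin.infinite_compl).nonempty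
  refine ⟨β + (N : Qb), fun n hn hmem => hβ ?_⟩
  set α : Qb := β + (N : Qb) with hα
  have hncast : (N : Qb) = algebraMap ℚ Qb (N : ℚ) := by simp
  have hminα : minpoly ℚ α = (minpoly ℚ β).comp (X - C (N : ℚ)) := by
    rw [hα, hncast]; exact minpoly.add_algebraMap β (N : ℚ)
  have hroot_tr : ∀ r : Qb, aeval r (minpoly ℚ α) = aeval (r - (N : Qb)) (minpoly ℚ β) := by
    intro r
    rw [hminα, aeval_comp]
    congr 1
    simp
  -- the injection on root sets
  have hcard : (minpoly ℚ α).natDegree ≤ (minpoly ℚ (α ^ n)).natDegree := by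
    rw [← card_rootSet_eq_natDegree ((minpoly.irreducible (hint α)).separable)
        (IsAlgClosed.splits (k := Qb) _),
      ← card_rootSet_eq_natDegree ((minpoly.irreducible (hint (α ^ n))).separable)
        (IsAlgClosed.splits (k := Qb) _)]
    have hwd : ∀ r : Qb, r ∈ (minpoly ℚ α).rootSet Qb →
        r ^ n ∈ (minpoly ℚ (α ^ n)).rootSet Qb := by
      intro r hr
      rw [mem_rootSet] at hr ⊢
      obtain ⟨g, hg⟩ := @exists_algEquiv_of_aeval_minpoly ℚ _ _ (AlgebraicClosure.isAlgebraic ℚ) α r hr.2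
      refine ⟨minpoly.ne_zero (hint _), ?_⟩
      rw [← hg, ← map_pow]
      exact (aeval_algHom_apply g.toAlgHom (α ^ n) (minpoly ℚ (α ^ n))).trans
        ((congrArg g.toAlgHom (minpoly.aeval ℚ (α ^ n))).trans (map_zero _))
    refine Fintype.card_le_of_injective (fun r => ⟨(r : Qb) ^ n, hwd r.1 r.2⟩) ?_
    rintro ⟨r, hr⟩ ⟨s, hs⟩ hrs
    have hpow : r ^ n = s ^ n := congrArg Subtype.val hrs
    refine Subtype.ext (show r = s from ?_)
    by_contra hne'
    have hs0 : s ≠ 0 := by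
      rintro rfl
      apply hne'
      have hn0 : n ≠ 0 := by omega
      refine (_root_.pow_eq_zero_iff hn0).mp ?_
      rw [hpow]; exact zero_pow hn0
    have htr : r - (N : Qb) ∈ R := by
      rw [hR, mem_rootSet]
      exact ⟨minpoly.ne_zero (hint β), by rw [← hroot_tr]; exact (mem_rootSet.mp hr).2⟩
    have hts : s - (N : Qb) ∈ R := by
      rw [hR, mem_rootSet]
      exact ⟨minpoly.ne_zero (hint β), by rw [← hroot_tr]; exact (mem_rootSet.mp hs).2⟩
    have hrL : r ∈ L := by
      have : r - (N : Qb) + (N : Qb) ∈ L :=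
        add_mem (IntermediateField.subset_adjoin ℚ R htr) (IntermediateField.natCast_mem L N)
      simpa using this
    have hsL : s ∈ L := by
      have : s - (N : Qb) + (N : Qb) ∈ L :=
        add_mem (IntermediateField.subset_adjoin ℚ R hts) (IntermediateField.natCast_mem L N)
      simpa using this
    set u : L := ⟨r / s, div_mem hrL hsL⟩ with hu
    have huT : u ∈ T := by
      refine ⟨n, hn, ?_⟩
      have : (r / s) ^ n = 1 := by
        rw [div_pow, hpow, div_self (pow_ne_zero _ hs0)]
      exact Subtype.ext (by push_cast [hu]; exact this)
    have : N ∈ Bad := by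
      rw [hBadDef]
      refine Set.mem_biUnion htr (Set.mem_biUnion hts (Set.mem_biUnion huT ?_))
      refine ⟨fun h => hne' (by linear_combination h), ?_⟩
      show r - (N : Qb) + (N : Qb) = (r / s) * (s - (N : Qb) + (N : Qb))
      field_simp
      ring
    exact hN this
  -- conclude
  haveI : FiniteDimensional ℚ ℚ⟮α⟯ := IntermediateField.adjoin.finiteDimensional (hint α)
  have hle2 : ℚ⟮α ^ n⟯ ≤ ℚ⟮α⟯ :=
    adjoin_simple_le_iff.mpr (pow_mem (mem_adjoin_simple_self ℚ α) n)
  have heq : ℚ⟮α ^ n⟯ = ℚ⟮α⟯ := by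
    refine IntermediateField.eq_of_le_of_finrank_le hle2 ?_
    rw [IntermediateField.adjoin.finrank (hint α), IntermediateField.adjoin.finrank (hint (α ^ n))]
    exact hcard
  have hβα : β ∈ ℚ⟮α⟯ := by
    have := sub_mem (mem_adjoin_simple_self ℚ α) (IntermediateField.natCast_mem ℚ⟮α⟯ N)
    simpa [hα] using this
  rw [← heq] at hβα
  exact adjoin_simple_le_iff.mpr hmem hβα

set_option maxHeartbeats 1000000 in
/-- Let `𝓕` be a family of nonzero rational polynomials and `𝓖 ⊆ 𝓕` a subfamily such
that `ℚ(𝓡_𝓕)` is a finite proper extension of `ℚ(𝓡_𝓖)` (i.e. `1 < [ℚ(𝓡_𝓕) : ℚ(𝓡_𝓖)] < ∞`).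
Then `ℚ(𝓡_𝓕)` has property P. -/
theorem stmt_7 (𝓕 𝓖 : Set ℚ[X]) (h𝓕 : ∀ P ∈ 𝓕, P ≠ 0) (h𝓖 : 𝓖 ⊆ 𝓕)
    (KF KG : IntermediateField ℚ (AlgebraicClosure ℚ))
    (hKF : KF = IntermediateField.adjoin ℚ {x : AlgebraicClosure ℚ | ∃ P ∈ 𝓕, aeval x P = 0})
    (hKG : KG = IntermediateField.adjoin ℚ {x : AlgebraicClosure ℚ | ∃ P ∈ 𝓖, aeval x P = 0})
    (hle : KG ≤ KF) (hne : KG ≠ KF)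
    (hfin : FiniteDimensional KG (IntermediateField.extendScalars hle)) :
    ∃ α : AlgebraicClosure ℚ, ∀ n : ℕ, 1 ≤ n → α ^ n ∉ KF := by
  by_cases hT : KF = ⊤
  · exfalso
    have hstab : ∀ (g : Qb ≃ₐ[ℚ] Qb), ∀ x ∈ KG, g x ∈ KG := by
      intro g x hx
      have himg : (g '' {x : Qb | ∃ P ∈ 𝓖, aeval x P = 0})
          = {x : Qb | ∃ P ∈ 𝓖, aeval x P = 0} := by
        ext z
        constructor
        · rintro ⟨w, ⟨P, hP, hw⟩, rfl⟩
          exact ⟨P, hP, by rw [aeval_algHom_apply g w P, hw, map_zero]⟩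
        · rintro ⟨P, hP, hz⟩
          refine ⟨g.symm z, ⟨P, hP, ?_⟩, by simp⟩
          rw [aeval_algHom_apply g.symm z P, hz, map_zero]
      have hmap : KG.map g.toAlgHom = KG := by
        rw [hKG, IntermediateField.adjoin_map]
        simp only [AlgEquiv.coe_toAlgHom]
        rw [himg]
      rw [← hmap]
      exact ⟨x, hx, rfl⟩
    have hKGneT : KG ≠ ⊤ := fun h => hne (h.trans hT.symm)
    have hfd : FiniteDimensional ↥KG Qb := by
      have hext : IntermediateField.extendScalars hle = (⊤ : IntermediateField ↥KG Qb) := by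
        ext z
        rw [IntermediateField.mem_extendScalars, hT]
        simp
      rw [hext] at hfin
      exact Module.Finite.equiv (IntermediateField.topEquiv (F := ↥KG) (E := Qb)).toLinearEquiv
    exact not_finite_proper KG hstab hKGneT hfd
  · exact propP_of_ne_top KF hT
end
end

section
/- Let ℚ_ab denote the subfield of ℚ̄ generated over ℚ by all roots of unity (equivalently, by all roots of the polynomials xⁿ − 1, n ≥ 1). Then ℚ_ab has property P: there exists α ∈ ℚ̄ such that αⁿ ∉ ℚ_ab for all integers n ≥ 1. -/
open IntermediateField Polynomial

set_option synthInstance.maxHeartbeats 400000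
set_option maxHeartbeats 800000

noncomputable abbrev Qbar := AlgebraicClosure ℚ

instance : IsAlgClosure ℚ Qbar := by
  have h : (AlgebraicClosure.instAlgebra (R := ℚ) (k := ℚ)) = (inferInstance : Algebra ℚ Qbar) :=
    Subsingleton.elim _ _
  have := @AlgebraicClosure.instIsAlgClosure ℚ _
  rw [h] at this
  exact this

/-- commuting lemma -/
theorem commute_on_K (σ τ : Qbar ≃ₐ[ℚ] Qbar) (x : Qbar)
    (hx : x ∈ IntermediateField.adjoin ℚ {x : Qbar | ∃ m : ℕ, 1 ≤ m ∧ x ^ m = 1}) :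
    σ (τ x) = τ (σ x) := by
  induction hx using IntermediateField.adjoin_induction with
  | mem z hz =>
    obtain ⟨m, hm, hzm⟩ := hz
    have hfin : IsOfFinOrder z := isOfFinOrder_iff_pow_eq_one.mpr ⟨m, hm, hzm⟩
    set d := orderOf z with hd
    have hd0 : d ≠ 0 := (orderOf_pos_iff.mpr hfin).ne'
    haveI : NeZero d := ⟨hd0⟩
    have hprim : IsPrimitiveRoot z d := IsPrimitiveRoot.orderOf z
    have hσ : (σ z) ^ d = 1 := by rw [← map_pow, pow_orderOf_eq_one, map_one]
    have hτ : (τ z) ^ d = 1 := by rw [← map_pow, pow_orderOf_eq_one, map_one]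
    obtain ⟨a, _, ha⟩ := hprim.eq_pow_of_pow_eq_one hσ
    obtain ⟨b, _, hb⟩ := hprim.eq_pow_of_pow_eq_one hτ
    rw [← ha, ← hb, map_pow, map_pow, ← ha, ← hb, ← pow_mul, ← pow_mul, mul_comm]
  | algebraMap z => simp
  | add x y _ _ hx hy => simp [hx, hy]
  | inv x _ hx => simp [hx]
  | mul x y _ _ hx hy => simp [hx, hy]

lemma no_rat_cbrt : ∀ b : ℚ, b ^ 3 ≠ (2 : ℚ) := by
  intro b hb
  have hb0 : b ≠ 0 := by rintro rfl; norm_num at hb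
  have h1 : padicValRat 2 (b ^ 3) = 3 * padicValRat 2 b := padicValRat.pow b
  have h2 : padicValRat 2 (2 : ℚ) = 1 := padicValRat.self (by norm_num)
  rw [hb] at h1
  rw [h2] at h1
  omega

lemma irr3 : Irreducible (X ^ 3 - C (2 : ℚ)) :=
  X_pow_sub_C_irreducible_of_prime Nat.prime_three no_rat_cbrt

lemma minpoly_cbrt2 (c : Qbar) (hc : c ^ 3 = 2) : minpoly ℚ c = X ^ 3 - C (2 : ℚ) := by
  refine (minpoly.eq_of_irreducible_of_monic irr3 ?_ (monic_X_pow_sub_C _ (by norm_num))).symm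
  simp [hc]

lemma finrank_cbrt2 (c : Qbar) (hc : c ^ 3 = 2) :
    Module.finrank ℚ (ℚ⟮c⟯ : IntermediateField ℚ Qbar) = 3 := by
  rw [IntermediateField.adjoin.finrank (Algebra.IsIntegral.isIntegral c), minpoly_cbrt2 c hc,
    natDegree_X_pow_sub_C]

lemma irrQ2 : Irreducible (X ^ 2 + X + 1 : ℚ[X]) := by
  have hd : (X ^ 2 + X + 1 : ℚ[X]).natDegree = 2 := by compute_degree!
  rw [Polynomial.irreducible_iff_roots_eq_zero_of_degree_le_three (by rw [hd]) (by rw [hd]; norm_num)]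
  rw [Multiset.eq_zero_iff_forall_notMem]
  intro r hr
  rw [mem_roots (by intro h; simpa [h] using hd), IsRoot] at hr
  simp only [eval_add, eval_pow, eval_X, eval_one] at hr
  nlinarith [sq_nonneg (2 * r + 1)]

lemma monicQ2 {K : Type*} [Field K] : (X ^ 2 + X + 1 : K[X]).Monic := by
  have : (X ^ 2 + X + 1 : K[X]) = X ^ 2 + (X + 1) := by ring
  rw [this]
  apply Polynomial.monic_X_pow_add
  apply lt_of_le_of_lt (Polynomial.degree_add_le _ _)
  simp [Polynomial.degree_X, Polynomial.degree_one]

lemma minpoly_omega (z : Qbar) (hz : z ^ 2 + z + 1 = 0) : minpoly ℚ z = X ^ 2 + X + 1 := by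
  refine (minpoly.eq_of_irreducible_of_monic irrQ2 ?_ monicQ2).symm
  simp [hz]

lemma finrank_omega (z : Qbar) (hz : z ^ 2 + z + 1 = 0) :
    Module.finrank ℚ (ℚ⟮z⟯ : IntermediateField ℚ Qbar) = 2 := by
  have hd : (X ^ 2 + X + 1 : ℚ[X]).natDegree = 2 := by compute_degree!
  rw [IntermediateField.adjoin.finrank (Algebra.IsIntegral.isIntegral z), minpoly_omega z hz, hd]

lemma exists_sigma (c ω : Qbar) (hc : c ^ 3 = 2) (hω : ω ^ 2 + ω + 1 = 0) :
    ∃ σ : Qbar ≃ₐ[ℚ] Qbar, σ c = ω * c ∧ σ ω = ω := by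
  set F : IntermediateField ℚ Qbar := ℚ⟮ω⟯ with hF
  haveI : FiniteDimensional ℚ F :=
    IntermediateField.adjoin.finiteDimensional (Algebra.IsIntegral.isIntegral ω)
  have hFr : Module.finrank ℚ F ≤ 2 := by
    rw [hF, IntermediateField.adjoin.finrank (Algebra.IsIntegral.isIntegral ω)]
    have hne : (X ^ 2 + X + 1 : ℚ[X]) ≠ 0 := monicQ2.ne_zero
    have hdvd : minpoly ℚ ω ∣ X ^ 2 + X + 1 := minpoly.dvd ℚ ω (by simp [hω])
    have h2 := Polynomial.natDegree_le_of_dvd hdvd hne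
    have hd : (X ^ 2 + X + 1 : ℚ[X]).natDegree = 2 := by compute_degree!
    omega
  have hno : ∀ b : F, b ^ 3 ≠ (2 : F) := by
    intro b hb
    have hb0 : ((b : Qbar)) ^ 3 = 2 := by
      have := congrArg (fun x : F => (x : Qbar)) hb
      simpa [show ((2 : F) : Qbar) = 2 from map_ofNat F.val 2] using this
    have hle : (ℚ⟮(b : Qbar)⟯ : IntermediateField ℚ Qbar) ≤ F := by
      rw [IntermediateField.adjoin_le_iff, Set.singleton_subset_iff]
      exact b.2
    have hmul := IntermediateField.finrank_bot_mul_relfinrank hle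
    rw [finrank_cbrt2 _ hb0] at hmul
    have hpos : 0 < Module.finrank ℚ F := Module.finrank_pos
    omega
  have hirrF : Irreducible (X ^ 3 - C (2 : F)) :=
    X_pow_sub_C_irreducible_of_prime Nat.prime_three hno
  have hminF : minpoly F c = X ^ 3 - C (2 : F) := by
    refine (minpoly.eq_of_irreducible_of_monic hirrF ?_
      (monic_X_pow_sub_C _ (by norm_num))).symm
    have h2F : (algebraMap F Qbar) (2 : F) = 2 := by norm_cast
    simp only [map_sub, map_pow, Polynomial.aeval_X, Polynomial.aeval_C, h2F, hc, sub_self]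
  have hω3 : ω ^ 3 = 1 := by linear_combination (ω - 1) * hω
  have hev : (Polynomial.aeval (ω * c)) (minpoly F c) = 0 := by
    rw [hminF]
    simp only [map_sub, map_pow, aeval_X, aeval_C]
    have h2F : (algebraMap F Qbar) (2 : F) = 2 := by norm_cast
    rw [h2F]
    linear_combination (c ^ 3) * hω3 + hc
  obtain ⟨σ₀, hσ₀⟩ := minpoly.exists_algEquiv_of_root'
    (K := F) ((Algebra.IsIntegral.isIntegral c).isAlgebraic) hev
  refine ⟨σ₀.restrictScalars ℚ, hσ₀, ?_⟩
  have hmem : ω ∈ F := IntermediateField.mem_adjoin_simple_self ℚ ω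
  have := σ₀.commutes ⟨ω, hmem⟩
  exact this

lemma exists_tau (c ω : Qbar) (hc : c ^ 3 = 2) (hω : ω ^ 2 + ω + 1 = 0) :
    ∃ τ : Qbar ≃ₐ[ℚ] Qbar, τ c = c ∧ τ ω = ω ^ 2 := by
  set E : IntermediateField ℚ Qbar := ℚ⟮c⟯ with hE
  haveI : FiniteDimensional ℚ E :=
    IntermediateField.adjoin.finiteDimensional (Algebra.IsIntegral.isIntegral c)
  have hEr : Module.finrank ℚ E = 3 := finrank_cbrt2 c hc
  have hd : (X ^ 2 + X + 1 : (E : Type _)[X]).natDegree = 2 := by compute_degree!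
  have hirrE : Irreducible (X ^ 2 + X + 1 : (E : Type _)[X]) := by
    rw [Polynomial.irreducible_iff_roots_eq_zero_of_degree_le_three (by rw [hd])
      (by rw [hd]; norm_num)]
    rw [Multiset.eq_zero_iff_forall_notMem]
    intro z hz
    rw [Polynomial.mem_roots (monicQ2.ne_zero), Polynomial.IsRoot] at hz
    simp only [Polynomial.eval_add, Polynomial.eval_pow, Polynomial.eval_X,
      Polynomial.eval_one] at hz
    have hz0 : ((z : Qbar)) ^ 2 + (z : Qbar) + 1 = 0 := by
      have := congrArg (fun x : E => (x : Qbar)) hz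
      simpa using this
    have hle : (ℚ⟮(z : Qbar)⟯ : IntermediateField ℚ Qbar) ≤ E := by
      rw [IntermediateField.adjoin_le_iff, Set.singleton_subset_iff]
      exact z.2
    have hmul := IntermediateField.finrank_bot_mul_relfinrank hle
    rw [finrank_omega _ hz0, hEr] at hmul
    omega
  have hminE : minpoly E ω = X ^ 2 + X + 1 := by
    refine (minpoly.eq_of_irreducible_of_monic hirrE ?_ monicQ2).symm
    simp only [map_add, map_pow, map_one, Polynomial.aeval_X, Polynomial.aeval_one, hω]
  have hev : (Polynomial.aeval (ω ^ 2)) (minpoly E ω) = 0 := by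
    rw [hminE]
    simp only [map_add, map_pow, map_one, Polynomial.aeval_X, Polynomial.aeval_one]
    linear_combination (ω ^ 2 - ω + 1) * hω
  obtain ⟨τ₀, hτ₀⟩ := minpoly.exists_algEquiv_of_root'
    (K := E) ((Algebra.IsIntegral.isIntegral ω).isAlgebraic) hev
  refine ⟨τ₀.restrictScalars ℚ, ?_, hτ₀⟩
  have hmem : c ∈ E := IntermediateField.mem_adjoin_simple_self ℚ c
  exact τ₀.commutes ⟨c, hmem⟩

/-- The field `ℚ_ab`, the subfield of `ℚ̄` generated over `ℚ` by all roots of unity,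
has property P. -/
theorem stmt_9 :
    ∃ α : AlgebraicClosure ℚ, ∀ n : ℕ, 1 ≤ n →
      α ^ n ∉ IntermediateField.adjoin ℚ
        {x : AlgebraicClosure ℚ | ∃ m : ℕ, 1 ≤ m ∧ x ^ m = 1} := by
  obtain ⟨c, hc⟩ := IsAlgClosed.exists_pow_nat_eq (2 : Qbar) (n := 3) (by norm_num)
  obtain ⟨ω, hω'⟩ := IsAlgClosed.exists_root (X ^ 2 + X + 1 : Qbar[X]) (by
    have : (X ^ 2 + X + 1 : Qbar[X]).natDegree = 2 := by compute_degree!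
    intro h
    rw [Polynomial.degree_eq_natDegree monicQ2.ne_zero, this] at h
    exact (by norm_num : (2 : WithBot ℕ) ≠ 0) h)
  have hω : ω ^ 2 + ω + 1 = 0 := by
    have := hω'
    simp only [Polynomial.IsRoot, Polynomial.eval_add, Polynomial.eval_pow,
      Polynomial.eval_X, Polynomial.eval_one] at this
    exact this
  obtain ⟨σ, hσc, hσω⟩ := exists_sigma c ω hc hω
  obtain ⟨τ, hτc, hτω⟩ := exists_tau c ω hc hω
  have hω3 : ω ^ 3 = 1 := by linear_combination (ω - 1) * hω
  have hc0 : c ≠ 0 := by intro h; rw [h] at hc; norm_num at hc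
  refine ⟨1 + c, fun n hn hmem => ?_⟩
  have hτα : τ (1 + c) = 1 + c := by rw [map_add, map_one, hτc]
  have hσα : σ (1 + c) = 1 + ω * c := by rw [map_add, map_one, hσc]
  have hτ1 : τ (1 + ω * c) = 1 + ω ^ 2 * c := by
    rw [map_add, map_one, map_mul, hτc, hτω]
  have hσ1 : σ (1 + ω * c) = 1 + ω ^ 2 * c := by
    rw [map_add, map_one, map_mul, hσω, hσc]; ring
  have hσ2 : σ (1 + ω ^ 2 * c) = 1 + c := by
    rw [map_add, map_one, map_mul, map_pow, hσω, hσc]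
    linear_combination c * hω3
  have hcomm := commute_on_K σ τ ((1 + c) ^ n) hmem
  rw [map_pow, map_pow, hτα, hσα, map_pow, map_pow, hσα, hτ1] at hcomm
  -- hcomm : (1 + ω*c)^n = (1 + ω^2*c)^n
  have E2 : (1 + ω ^ 2 * c) ^ n = (1 + c) ^ n := by
    have h := congrArg σ hcomm
    rw [map_pow, map_pow, hσ1, hσ2] at h
    exact h
  have E1 : (1 + ω * c) ^ n = (1 + c) ^ n := hcomm.trans E2
  have hprod : (1 + c) * (1 + ω * c) * (1 + ω ^ 2 * c) = 3 := by
    linear_combination (c + ω * c ^ 2 + (ω - 1) * c ^ 3) * hω + hc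
  have h3n : ((1 + c) ^ n) ^ 3 = 3 ^ n := by
    calc ((1 + c) ^ n) ^ 3 = (1 + c) ^ n * (1 + ω * c) ^ n * (1 + ω ^ 2 * c) ^ n := by
          rw [E1, E2]; ring
    _ = ((1 + c) * (1 + ω * c) * (1 + ω ^ 2 * c)) ^ n := by rw [mul_pow, mul_pow]
    _ = 3 ^ n := by rw [hprod]
  have hm : (c - 1) * (1 + c) ^ 3 = 3 := by linear_combination (c + 2) * hc
  have hkey : (c - 1) ^ n * 3 ^ n = 1 * 3 ^ n := by
    calc (c - 1) ^ n * 3 ^ n = (c - 1) ^ n * ((1 + c) ^ n) ^ 3 := by rw [h3n]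
    _ = ((c - 1) * (1 + c) ^ 3) ^ n := by rw [pow_right_comm, ← mul_pow]
    _ = 1 * 3 ^ n := by rw [hm, one_mul]
  have h3ne : (3 : Qbar) ^ n ≠ 0 := pow_ne_zero _ (by norm_num)
  have hcn : (c - 1) ^ n = 1 := mul_right_cancel₀ h3ne hkey
  have hc1mem : c - 1 ∈ IntermediateField.adjoin ℚ
      {x : Qbar | ∃ m : ℕ, 1 ≤ m ∧ x ^ m = 1} :=
    IntermediateField.subset_adjoin _ _ ⟨n, hn, hcn⟩
  have hcmem : c ∈ IntermediateField.adjoin ℚ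
      {x : Qbar | ∃ m : ℕ, 1 ≤ m ∧ x ^ m = 1} := by
    have := add_mem hc1mem (one_mem _)
    simpa using this
  have h2 := commute_on_K σ τ c hcmem
  rw [hτc, hσc, map_mul, hτc, hτω] at h2
  -- h2 : ω * c = ω ^ 2 * c
  have hsq : ω ^ 2 = ω := (mul_right_cancel₀ hc0 h2).symm
  have h2ω : 2 * ω + 1 = 0 := by linear_combination hω - hsq
  have habs : (3 : Qbar) = 0 := by linear_combination 4 * hω - (2 * ω + 1) * h2ω
  norm_num at habs
end
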